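/- arXiv:2210.10404 — 10 statements merged into one kernel-verified Lean document; each statement's English description precedes it below -/
import Mathlib

section
/- Let x: ℝ → ℝⁿ be a T-periodic differentiable function with values in (0,1)ⁿ satisfying the ribosome flow model equations ẋᵢ = u_{i-1} x_{i-1}(1 - xᵢ) - uᵢ xᵢ(1 - x_{i+1}) for i = 1,…,n (with x₀ ≡ 1, x_{n+1} ≡ 0), where the uᵢ: ℝ → ℝ are continuous, positive, and T-periodic. Let e ∈ (0,1)ⁿ satisfy the equilibrium equations ū_{i-1} e_{i-1}(1 - eᵢ) = ūᵢ eᵢ(1 - e_{i+1}) (with e₀ = 1, e_{n+1} = 0), where ūᵢ = (1/T)∫₀ᵀ uᵢ(t)dt. Setting zᵢ(t) = xᵢ(t) - eᵢ, then (1/T)∫₀ᵀ u₀(t) z₁(t) dt = -(1/T)∫₀ᵀ u_n(t) z_n(t) dt. -/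
open MeasureTheory intervalIntegral Real Filter

theorem rfm_eta01_eq_neg_etann
    (n : ℕ) (hn : 1 ≤ n) (T : ℝ) (hT : 0 < T)
    (u : ℕ → ℝ → ℝ) (x : ℕ → ℝ → ℝ) (e : ℕ → ℝ)
    (hu_cont : ∀ i, i ≤ n → Continuous (u i))
    (hu_pos : ∀ i, i ≤ n → ∀ t, 0 < u i t)
    (hu_per : ∀ i, i ≤ n → ∀ t, u i (t + T) = u i t)
    (hx0 : ∀ t, x 0 t = 1) (hxtop : ∀ t, x (n+1) t = 0)
    (hxdiff : ∀ i, 1 ≤ i → i ≤ n → Differentiable ℝ (x i))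
    (hxper : ∀ i, 1 ≤ i → i ≤ n → ∀ t, x i (t + T) = x i t)
    (hxmem : ∀ i, 1 ≤ i → i ≤ n → ∀ t, x i t ∈ Set.Ioo (0:ℝ) 1)
    (hode : ∀ i, 1 ≤ i → i ≤ n → ∀ t,
      deriv (x i) t
        = u (i-1) t * x (i-1) t * (1 - x i t) - u i t * x i t * (1 - x (i+1) t))
    (he0 : e 0 = 1) (hetop : e (n+1) = 0)
    (hemem : ∀ i, 1 ≤ i → i ≤ n → e i ∈ Set.Ioo (0:ℝ) 1)
    (heq : ∀ i, 1 ≤ i → i ≤ n →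
      (1/T * ∫ t in (0:ℝ)..T, u (i-1) t) * e (i-1) * (1 - e i)
        = (1/T * ∫ t in (0:ℝ)..T, u i t) * e i * (1 - e (i+1))) :
    (1/T * ∫ t in (0:ℝ)..T, u 0 t * (x 1 t - e 1))
      = -(1/T * ∫ t in (0:ℝ)..T, u n t * (x n t - e n)) := by
  have hxcont : ∀ i, 1 ≤ i → i ≤ n → Continuous (x i) :=
    fun i h1 h2 => (hxdiff i h1 h2).continuous
  have hu0c := hu_cont 0 (Nat.zero_le n)
  have hunc := hu_cont n le_rfl
  have hx1c := hxcont 1 le_rfl hn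
  have hxnc := hxcont n hn le_rfl
  set A := ∫ t in (0:ℝ)..T, u 0 t with hA
  set B := ∫ t in (0:ℝ)..T, u n t with hB
  -- equilibrium chain
  have chain : ∀ i, i ≤ n →
      (1/T * A) * e 0 * (1 - e 1)
        = (1/T * ∫ t in (0:ℝ)..T, u i t) * e i * (1 - e (i+1)) := by
    intro i
    induction i with
    | zero => intro _; rfl
    | succ k ih =>
      intro hk
      rw [ih (Nat.le_of_succ_le hk)]
      have := heq (k+1) (Nat.succ_le_succ (Nat.zero_le k)) hk
      simpa using this
  have eqm : A * (1 - e 1) = B * e n := by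
    have := chain n le_rfl
    rw [he0, hetop] at this
    have hT' : T ≠ 0 := ne_of_gt hT
    field_simp at this
    linarith [this]
  -- dynamics: sum of ODEs telescopes
  have key : ∀ t : ℝ, HasDerivAt (fun s => ∑ i ∈ Finset.range n, x (i+1) s)
      (u 0 t * (1 - x 1 t) - u n t * x n t) t := by
    intro t
    have h : HasDerivAt (fun s => ∑ i ∈ Finset.range n, x (i+1) s)
        (∑ i ∈ Finset.range n, deriv (x (i+1)) t) t :=
      HasDerivAt.fun_sum (fun i hi => ((hxdiff (i+1) (by omega)
        (by have := Finset.mem_range.mp hi; omega)) t).hasDerivAt)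
    have hsum : ∑ i ∈ Finset.range n, deriv (x (i+1)) t
        = u 0 t * (1 - x 1 t) - u n t * x n t := by
      have hc : ∀ i ∈ Finset.range n, deriv (x (i+1)) t
          = (fun j => u j t * x j t * (1 - x (j+1) t)) i
            - (fun j => u j t * x j t * (1 - x (j+1) t)) (i+1) := by
        intro i hi
        have hi' := Finset.mem_range.mp hi
        have := hode (i+1) (by omega) (by omega) t
        simpa using this
      rw [Finset.sum_congr rfl hc, Finset.sum_range_sub']
      simp [hx0, hxtop]
    rw [← hsum]
    exact h
  have hScont : Continuous (fun t => u 0 t * (1 - x 1 t) - u n t * x n t) := by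
    fun_prop
  have hint0 : (∫ t in (0:ℝ)..T, (u 0 t * (1 - x 1 t) - u n t * x n t)) = 0 := by
    rw [intervalIntegral.integral_eq_sub_of_hasDerivAt
      (fun t _ => key t) (hScont.intervalIntegrable 0 T)]
    have hper : ∀ i ∈ Finset.range n, x (i+1) T = x (i+1) 0 := by
      intro i hi
      have hi' := Finset.mem_range.mp hi
      have := hxper (i+1) (by omega) (by omega) 0
      simpa using this
    rw [Finset.sum_congr rfl hper]
    ring
  have ha : IntervalIntegrable (fun t => u 0 t) volume 0 T :=
    hu0c.intervalIntegrable 0 T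
  have hb : IntervalIntegrable (fun t => u n t) volume 0 T :=
    hunc.intervalIntegrable 0 T
  have hp : IntervalIntegrable (fun t => u 0 t * x 1 t) volume 0 T :=
    (hu0c.mul hx1c).intervalIntegrable 0 T
  have hq : IntervalIntegrable (fun t => u n t * x n t) volume 0 T :=
    (hunc.mul hxnc).intervalIntegrable 0 T
  set P := ∫ t in (0:ℝ)..T, u 0 t * x 1 t with hP
  set Q := ∫ t in (0:ℝ)..T, u n t * x n t with hQ
  have dyn : A - P - Q = 0 := by
    have : (∫ t in (0:ℝ)..T, (u 0 t * (1 - x 1 t) - u n t * x n t))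
        = (∫ t in (0:ℝ)..T, (u 0 t - u 0 t * x 1 t - u n t * x n t)) := by
      congr 1; ext t; ring
    rw [this, intervalIntegral.integral_sub (ha.sub hp) hq,
      intervalIntegral.integral_sub ha hp] at hint0
    linarith [hint0]
  have hL : (∫ t in (0:ℝ)..T, u 0 t * (x 1 t - e 1)) = P - e 1 * A := by
    have : (∫ t in (0:ℝ)..T, u 0 t * (x 1 t - e 1))
        = (∫ t in (0:ℝ)..T, (u 0 t * x 1 t - e 1 * u 0 t)) := by
      congr 1; ext t; ring
    rw [this, intervalIntegral.integral_sub hp (ha.const_mul _),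
      intervalIntegral.integral_const_mul]
  have hR : (∫ t in (0:ℝ)..T, u n t * (x n t - e n)) = Q - e n * B := by
    have : (∫ t in (0:ℝ)..T, u n t * (x n t - e n))
        = (∫ t in (0:ℝ)..T, (u n t * x n t - e n * u n t)) := by
      congr 1; ext t; ring
    rw [this, intervalIntegral.integral_sub hq (hb.const_mul _),
      intervalIntegral.integral_const_mul]
  rw [hL, hR]
  have : P - e 1 * A = -(Q - e n * B) := by linear_combination eqm - dyn
  rw [this]
  ring
end

section
/- Under the hypotheses of the RFM with a T-periodic solution x and equilibrium e of the averaged system (as above), define the average periodic production rate R_P = (1/T)∫₀ᵀ u_n(t) x_n(t) dt and the constant production rate R_C = ū_n e_n. Then R_P = R_C - (1/T)∫₀ᵀ u₀(t)(x₁(t) - e₁) dt. In particular, if ∫₀ᵀ u₀(t)(x₁(t) - e₁) dt ≥ 0 then R_P ≤ R_C. -/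
open MeasureTheory intervalIntegral Real Filter

theorem rfm_RP_formula_and_no_goe
    (n : ℕ) (hn : 1 ≤ n) (T : ℝ) (hT : 0 < T)
    (u : ℕ → ℝ → ℝ) (x : ℕ → ℝ → ℝ) (e : ℕ → ℝ)
    (hu_cont : ∀ i, i ≤ n → Continuous (u i))
    (hu_pos : ∀ i, i ≤ n → ∀ t, 0 < u i t)
    (hu_per : ∀ i, i ≤ n → ∀ t, u i (t + T) = u i t)
    (hx0 : ∀ t, x 0 t = 1) (hxtop : ∀ t, x (n+1) t = 0)
    (hxdiff : ∀ i, 1 ≤ i → i ≤ n → Differentiable ℝ (x i))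
    (hxper : ∀ i, 1 ≤ i → i ≤ n → ∀ t, x i (t + T) = x i t)
    (hxmem : ∀ i, 1 ≤ i → i ≤ n → ∀ t, x i t ∈ Set.Ioo (0:ℝ) 1)
    (hode : ∀ i, 1 ≤ i → i ≤ n → ∀ t,
      deriv (x i) t
        = u (i-1) t * x (i-1) t * (1 - x i t) - u i t * x i t * (1 - x (i+1) t))
    (he0 : e 0 = 1) (hetop : e (n+1) = 0)
    (hemem : ∀ i, 1 ≤ i → i ≤ n → e i ∈ Set.Ioo (0:ℝ) 1)
    (heq : ∀ i, 1 ≤ i → i ≤ n →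
      (1/T * ∫ t in (0:ℝ)..T, u (i-1) t) * e (i-1) * (1 - e i)
        = (1/T * ∫ t in (0:ℝ)..T, u i t) * e i * (1 - e (i+1))) :
    (1/T * ∫ t in (0:ℝ)..T, u n t * x n t)
      = (1/T * ∫ t in (0:ℝ)..T, u n t) * e n - (1/T * ∫ t in (0:ℝ)..T, u 0 t * (x 1 t - e 1))
    ∧ ((0 ≤ ∫ t in (0:ℝ)..T, u 0 t * (x 1 t - e 1)) →
        1/T * ∫ t in (0:ℝ)..T, u n t * x n t ≤ (1/T * ∫ t in (0:ℝ)..T, u n t) * e n) := by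
  -- continuity of each x j
  have hxc : ∀ j, j ≤ n + 1 → Continuous (x j) := by
    intro j hj
    rcases Nat.eq_zero_or_pos j with h0 | hpos
    · subst h0; exact continuous_const.congr fun t => (hx0 t).symm
    · rcases eq_or_lt_of_le hj with h | h
      · subst h; exact continuous_const.congr fun t => (hxtop t).symm
      · exact (hxdiff j hpos (Nat.lt_succ_iff.mp h)).continuous
  set F : ℕ → ℝ → ℝ := fun i t => u i t * x i t * (1 - x (i+1) t) with hF
  have hFc : ∀ i, i ≤ n → Continuous (F i) := by
    intro i hi
    exact ((hu_cont i hi).mul (hxc i (hi.trans (Nat.le_succ n)))).mul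
      (continuous_const.sub (hxc (i+1) (Nat.succ_le_succ hi)))
  -- step lemma
  have step : ∀ i, 1 ≤ i → i ≤ n →
      (∫ t in (0:ℝ)..T, F (i-1) t) = ∫ t in (0:ℝ)..T, F i t := by
    intro i h1 h2
    have hi1 : i - 1 + 1 = i := Nat.succ_pred_eq_of_pos h1
    have hder : ∀ t ∈ Set.uIcc (0:ℝ) T, HasDerivAt (x i) (F (i-1) t - F i t) t := by
      intro t _
      have hd := (hxdiff i h1 h2 t).hasDerivAt
      have : deriv (x i) t = F (i-1) t - F i t := by
        rw [hode i h1 h2 t]; simp only [hF, hi1]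
      rwa [this] at hd
    have hint : IntervalIntegrable (fun t => F (i-1) t - F i t) volume 0 T :=
      (((hFc (i-1) ((Nat.sub_le i 1).trans h2)).sub (hFc i h2))).intervalIntegrable 0 T
    have hftc := intervalIntegral.integral_eq_sub_of_hasDerivAt hder hint
    have hper : x i T = x i 0 := by simpa using hxper i h1 h2 0
    rw [hper, sub_self] at hftc
    have hsub : (∫ t in (0:ℝ)..T, (F (i-1) t - F i t))
        = (∫ t in (0:ℝ)..T, F (i-1) t) - ∫ t in (0:ℝ)..T, F i t :=
      intervalIntegral.integral_sub
        ((hFc (i-1) ((Nat.sub_le i 1).trans h2)).intervalIntegrable 0 T)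
        ((hFc i h2).intervalIntegrable 0 T)
    rw [hsub] at hftc
    linarith
  have chain : ∀ k, k ≤ n → (∫ t in (0:ℝ)..T, F 0 t) = ∫ t in (0:ℝ)..T, F k t := by
    intro k
    induction k with
    | zero => intro _; rfl
    | succ m ih =>
      intro hm
      have := step (m+1) (Nat.succ_le_succ (Nat.zero_le m)) hm
      simp only [Nat.add_sub_cancel] at this
      exact (ih (Nat.le_of_succ_le hm)).trans this
  -- equilibrium chain
  have echain : ∀ k, k ≤ n →
      (1/T * ∫ t in (0:ℝ)..T, u 0 t) * e 0 * (1 - e 1)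
        = (1/T * ∫ t in (0:ℝ)..T, u k t) * e k * (1 - e (k+1)) := by
    intro k
    induction k with
    | zero => intro _; rfl
    | succ m ih =>
      intro hm
      have := heq (m+1) (Nat.succ_le_succ (Nat.zero_le m)) hm
      simp only [Nat.add_sub_cancel] at this
      exact (ih (Nat.le_of_succ_le hm)).trans this
  have hE := echain n le_rfl
  rw [he0, hetop] at hE
  -- rewrite F n integral
  have hFn : (∫ t in (0:ℝ)..T, u n t * x n t) = ∫ t in (0:ℝ)..T, F n t := by
    apply intervalIntegral.integral_congr
    intro t _; simp [hF, hxtop]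
  have hF0 : (∫ t in (0:ℝ)..T, F 0 t)
      = (∫ t in (0:ℝ)..T, u 0 t) - ∫ t in (0:ℝ)..T, u 0 t * x 1 t := by
    have h1 : (∫ t in (0:ℝ)..T, F 0 t)
        = ∫ t in (0:ℝ)..T, (u 0 t - u 0 t * x 1 t) := by
      apply intervalIntegral.integral_congr
      intro t _; simp [hF, hx0 t]; ring
    rw [h1]
    exact intervalIntegral.integral_sub
      ((hu_cont 0 (Nat.zero_le n)).intervalIntegrable 0 T)
      (((hu_cont 0 (Nat.zero_le n)).mul (hxc 1 (Nat.succ_le_succ (Nat.zero_le n)))).intervalIntegrable 0 T)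
  have hD : (∫ t in (0:ℝ)..T, u 0 t * (x 1 t - e 1))
      = (∫ t in (0:ℝ)..T, u 0 t * x 1 t) - e 1 * ∫ t in (0:ℝ)..T, u 0 t := by
    have h1 : (∫ t in (0:ℝ)..T, u 0 t * (x 1 t - e 1))
        = ∫ t in (0:ℝ)..T, (u 0 t * x 1 t - e 1 * u 0 t) := by
      apply intervalIntegral.integral_congr
      intro t _; ring
    rw [h1, intervalIntegral.integral_sub (f := fun t => u 0 t * x 1 t) (g := fun t => e 1 * u 0 t)
      (((hu_cont 0 (Nat.zero_le n)).mul (hxc 1 (Nat.succ_le_succ (Nat.zero_le n)))).intervalIntegrable 0 T)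
      ((continuous_const.mul (hu_cont 0 (Nat.zero_le n))).intervalIntegrable 0 T),
      intervalIntegral.integral_const_mul]
  have hmain : (1/T * ∫ t in (0:ℝ)..T, u n t * x n t)
      = (1/T * ∫ t in (0:ℝ)..T, u n t) * e n
        - (1/T * ∫ t in (0:ℝ)..T, u 0 t * (x 1 t - e 1)) := by
    rw [hFn, ← chain n le_rfl, hF0, hD]
    nlinarith [hE]
  refine ⟨hmain, fun hpos => ?_⟩
  rw [hmain]
  have : 0 ≤ 1/T * ∫ t in (0:ℝ)..T, u 0 t * (x 1 t - e 1) :=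
    mul_nonneg (by positivity) hpos
  linarith
end

section
/- Under the hypotheses of the RFM with T-periodic solution x and averaged equilibrium e, set zᵢ = xᵢ - eᵢ and define the moments η_{i,j} = (1/T)∫₀ᵀ uᵢ zⱼ dt and η_{i,j,k} = (1/T)∫₀ᵀ uᵢ zⱼ z_k dt (with z₀ ≡ z_{n+1} ≡ 0). Then for every i ∈ {0,1,…,n}: η_{i,i,i+1} = η_{0,1} + η_{i,i}(1 - e_{i+1}) - η_{i,i+1} eᵢ. -/
open MeasureTheory intervalIntegral Real Filter

theorem rfm_third_order_moments
    (n : ℕ) (hn : 1 ≤ n) (T : ℝ) (hT : 0 < T)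
    (u : ℕ → ℝ → ℝ) (x : ℕ → ℝ → ℝ) (e : ℕ → ℝ)
    (hu_cont : ∀ i, i ≤ n → Continuous (u i))
    (hu_pos : ∀ i, i ≤ n → ∀ t, 0 < u i t)
    (hu_per : ∀ i, i ≤ n → ∀ t, u i (t + T) = u i t)
    (hx0 : ∀ t, x 0 t = 1) (hxtop : ∀ t, x (n+1) t = 0)
    (hxdiff : ∀ i, 1 ≤ i → i ≤ n → Differentiable ℝ (x i))
    (hxper : ∀ i, 1 ≤ i → i ≤ n → ∀ t, x i (t + T) = x i t)
    (hxmem : ∀ i, 1 ≤ i → i ≤ n → ∀ t, x i t ∈ Set.Ioo (0:ℝ) 1)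
    (hode : ∀ i, 1 ≤ i → i ≤ n → ∀ t,
      deriv (x i) t
        = u (i-1) t * x (i-1) t * (1 - x i t) - u i t * x i t * (1 - x (i+1) t))
    (he0 : e 0 = 1) (hetop : e (n+1) = 0)
    (hemem : ∀ i, 1 ≤ i → i ≤ n → e i ∈ Set.Ioo (0:ℝ) 1)
    (heq : ∀ i, 1 ≤ i → i ≤ n →
      (1/T * ∫ t in (0:ℝ)..T, u (i-1) t) * e (i-1) * (1 - e i)
        = (1/T * ∫ t in (0:ℝ)..T, u i t) * e i * (1 - e (i+1))) :
    ∀ i, i ≤ n →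
      (1/T * ∫ t in (0:ℝ)..T, u i t * (x i t - e i) * (x (i+1) t - e (i+1)))
        = (1/T * ∫ t in (0:ℝ)..T, u 0 t * (x 1 t - e 1))
          + (1/T * ∫ t in (0:ℝ)..T, u i t * (x i t - e i)) * (1 - e (i+1))
          - (1/T * ∫ t in (0:ℝ)..T, u i t * (x (i+1) t - e (i+1))) * e i := by
  have hTne : (T:ℝ) ≠ 0 := ne_of_gt hT
  -- continuity of x j for all j ≤ n+1
  have hxcont : ∀ i, i ≤ n + 1 → Continuous (x i) := by
    intro i hi
    rcases Nat.eq_zero_or_pos i with h0 | h1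
    · subst h0
      have : x 0 = fun _ => (1:ℝ) := funext hx0
      rw [this]; exact continuous_const
    · rcases eq_or_lt_of_le hi with h | h
      · subst h
        have : x (n+1) = fun _ => (0:ℝ) := funext hxtop
        rw [this]; exact continuous_const
      · exact (hxdiff i h1 (Nat.lt_succ_iff.mp h)).continuous
  have hI : ∀ f : ℝ → ℝ, Continuous f → IntervalIntegrable f volume 0 T :=
    fun f hf => hf.intervalIntegrable 0 T
  -- flow integral
  set J : ℕ → ℝ := fun i => ∫ t in (0:ℝ)..T, u i t * x i t * (1 - x (i+1) t) with hJdef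
  have hJcont : ∀ i, i ≤ n → Continuous (fun t => u i t * x i t * (1 - x (i+1) t)) := by
    intro i hi
    exact ((hu_cont i hi).mul (hxcont i (le_trans hi (Nat.le_succ n)))).mul
      (continuous_const.sub (hxcont (i+1) (Nat.succ_le_succ hi)))
  -- flow is constant: J i = J (i-1) for 1 ≤ i ≤ n
  have hJstep : ∀ i, 1 ≤ i → i ≤ n → J (i-1) = J i := by
    intro i h1 h2
    have hderiv_eq : deriv (x i) = fun t =>
        u (i-1) t * x (i-1) t * (1 - x i t) - u i t * x i t * (1 - x (i+1) t) :=
      funext (hode i h1 h2)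
    have hcont1 : Continuous (fun t => u (i-1) t * x (i-1) t * (1 - x i t)) := by
      have hle : i - 1 ≤ n := le_trans (Nat.sub_le i 1) h2
      have : i - 1 + 1 = i := Nat.succ_pred_eq_of_pos h1
      exact ((hu_cont (i-1) hle).mul (hxcont (i-1) (le_trans hle (Nat.le_succ n)))).mul
        (continuous_const.sub (by rw [← this] at h2 ⊢; exact hxcont (i-1+1) (le_trans h2 (Nat.le_succ n))))
    have hcont2 := hJcont i h2
    have hdc : Continuous (deriv (x i)) := by rw [hderiv_eq]; exact hcont1.sub hcont2
    have hftc : (∫ t in (0:ℝ)..T, deriv (x i) t) = x i T - x i 0 := by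
      apply intervalIntegral.integral_deriv_eq_sub
      · intro t _; exact hxdiff i h1 h2 t
      · exact hI _ hdc
    have hper : x i T = x i 0 := by
      have := hxper i h1 h2 0; rwa [zero_add] at this
    have hzero : (∫ t in (0:ℝ)..T, deriv (x i) t) = 0 := by rw [hftc, hper, sub_self]
    have hsplit : (∫ t in (0:ℝ)..T, deriv (x i) t)
        = (∫ t in (0:ℝ)..T, u (i-1) t * x (i-1) t * (1 - x i t))
          - ∫ t in (0:ℝ)..T, u i t * x i t * (1 - x (i+1) t) := by
      rw [hderiv_eq]
      exact intervalIntegral.integral_sub (hI _ hcont1) (hI _ hcont2)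
    have hi1 : i - 1 + 1 = i := Nat.succ_pred_eq_of_pos h1
    have : J (i-1) - J i = 0 := by
      rw [hJdef]; simp only []; rw [hi1, ← hsplit]; exact hzero
    linarith
  have hJ0 : ∀ i, i ≤ n → J i = J 0 := by
    intro i
    induction i with
    | zero => intro _; rfl
    | succ k ih =>
      intro hk
      have h1 : (1:ℕ) ≤ k + 1 := Nat.succ_le_succ (Nat.zero_le k)
      have := hJstep (k+1) h1 hk
      simp only [Nat.add_sub_cancel] at this
      rw [← this]; exact ih (le_trans (Nat.le_succ k) hk)
  -- chained equilibrium identity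
  have hE : ∀ i, i ≤ n →
      (∫ t in (0:ℝ)..T, u i t) * (e i * (1 - e (i+1)))
        = (∫ t in (0:ℝ)..T, u 0 t) * (1 - e 1) := by
    intro i
    induction i with
    | zero => intro _; rw [he0]; ring
    | succ k ih =>
      intro hk
      have hkle : k ≤ n := le_trans (Nat.le_succ k) hk
      have h := heq (k+1) (Nat.succ_le_succ (Nat.zero_le k)) hk
      simp only [Nat.add_sub_cancel] at h
      have h2 : (∫ t in (0:ℝ)..T, u k t) * (e k * (1 - e (k+1)))
          = (∫ t in (0:ℝ)..T, u (k+1) t) * (e (k+1) * (1 - e (k+2))) := by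
        apply mul_left_cancel₀ (show (1/T:ℝ) ≠ 0 by positivity)
        calc 1/T * ((∫ t in (0:ℝ)..T, u k t) * (e k * (1 - e (k+1))))
            = (1/T * ∫ t in (0:ℝ)..T, u k t) * e k * (1 - e (k+1)) := by ring
          _ = (1/T * ∫ t in (0:ℝ)..T, u (k+1) t) * e (k+1) * (1 - e (k+1+1)) := h
          _ = 1/T * ((∫ t in (0:ℝ)..T, u (k+1) t) * (e (k+1) * (1 - e (k+2)))) := by ring
      rw [← h2]; exact ih hkle
  -- main proof
  intro i hi
  -- useful continuity facts
  have hui : Continuous (u i) := hu_cont i hi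
  have hxi : Continuous (x i) := hxcont i (le_trans hi (Nat.le_succ n))
  have hxi1 : Continuous (x (i+1)) := hxcont (i+1) (Nat.succ_le_succ hi)
  have hu0 : Continuous (u 0) := hu_cont 0 (Nat.zero_le n)
  have hx1 : Continuous (x 1) := hxcont 1 (le_trans hn (Nat.le_succ n))
  have hcB : Continuous (fun t => u i t * (x i t - e i)) := hui.mul (hxi.sub continuous_const)
  have hcC : Continuous (fun t => u i t * (x (i+1) t - e (i+1))) :=
    hui.mul (hxi1.sub continuous_const)
  have hcD : Continuous (fun t => u i t * (x i t - e i) * (x (i+1) t - e (i+1))) :=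
    hcB.mul (hxi1.sub continuous_const)
  have hcP : Continuous (fun t => u 0 t * (x 1 t - e 1)) := hu0.mul (hx1.sub continuous_const)
  set A := ∫ t in (0:ℝ)..T, u i t with hA
  set B := ∫ t in (0:ℝ)..T, u i t * (x i t - e i) with hB
  set C := ∫ t in (0:ℝ)..T, u i t * (x (i+1) t - e (i+1)) with hC
  set D := ∫ t in (0:ℝ)..T, u i t * (x i t - e i) * (x (i+1) t - e (i+1)) with hD
  set P := ∫ t in (0:ℝ)..T, u 0 t * (x 1 t - e 1) with hP
  set A0 := ∫ t in (0:ℝ)..T, u 0 t with hA0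
  -- decomposition of J i
  have hJi : J i = e i * (1 - e (i+1)) * A + (1 - e (i+1)) * B - e i * C - D := by
    have e1 : e i * (1 - e (i+1)) * A = ∫ t in (0:ℝ)..T, e i * (1 - e (i+1)) * u i t :=
      (intervalIntegral.integral_const_mul _ _).symm
    have e2 : (1 - e (i+1)) * B = ∫ t in (0:ℝ)..T, (1 - e (i+1)) * (u i t * (x i t - e i)) :=
      (intervalIntegral.integral_const_mul _ _).symm
    have e3 : e i * C = ∫ t in (0:ℝ)..T, e i * (u i t * (x (i+1) t - e (i+1))) :=
      (intervalIntegral.integral_const_mul _ _).symm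
    rw [e1, e2, e3, hD,
      ← intervalIntegral.integral_add (hI _ (continuous_const.fun_mul hui))
        (hI _ (continuous_const.fun_mul hcB)),
      ← intervalIntegral.integral_sub
        (hI _ ((continuous_const.fun_mul hui).fun_add (continuous_const.fun_mul hcB)))
        (hI _ (continuous_const.fun_mul hcC)),
      ← intervalIntegral.integral_sub
        (hI _ (((continuous_const.fun_mul hui).fun_add (continuous_const.fun_mul hcB)).fun_sub
          (continuous_const.fun_mul hcC))) (hI _ hcD)]
    apply intervalIntegral.integral_congr
    intro t _
    ring
  -- decomposition of J 0
  have hJ0dec : J 0 = (1 - e 1) * A0 - P := by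
    have e1 : (1 - e 1) * A0 = ∫ t in (0:ℝ)..T, (1 - e 1) * u 0 t :=
      (intervalIntegral.integral_const_mul _ _).symm
    rw [e1, hP, ← intervalIntegral.integral_sub (hI _ (continuous_const.fun_mul hu0)) (hI _ hcP)]
    apply intervalIntegral.integral_congr
    intro t _
    simp only [hx0]
    ring
  have hEi : A * (e i * (1 - e (i+1))) = A0 * (1 - e 1) := hE i hi
  have hJJ : J i = J 0 := hJ0 i hi
  have hfinal : D = P + (1 - e (i+1)) * B - e i * C := by
    have : e i * (1 - e (i+1)) * A + (1 - e (i+1)) * B - e i * C - D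
        = (1 - e 1) * A0 - P := by rw [← hJi, ← hJ0dec, hJJ]
    nlinarith [hEi, this]
  rw [hfinal]
  ring
end

section
/- Under the hypotheses of the RFM with T-periodic solution x and averaged equilibrium e, with zᵢ = xᵢ - eᵢ and moments η_{i,j} = (1/T)∫₀ᵀ uᵢ zⱼ dt, the following inequality holds for every i ∈ {1,…,n}: η_{0,1} ≥ η_{i,i+1} eᵢ² - η_{i-1,i-1}(1 - eᵢ)², with equality if and only if zᵢ(t) ≡ 0 (i.e., xᵢ(t) ≡ eᵢ). -/
open MeasureTheory intervalIntegral Real Filter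

private lemma integral_split7 {T : ℝ} (f1 f2 f3 f4 f5 f6 f7 : ℝ → ℝ)
    (h1 : Continuous f1) (h2 : Continuous f2) (h3 : Continuous f3) (h4 : Continuous f4)
    (h5 : Continuous f5) (h6 : Continuous f6) (h7 : Continuous f7) :
    (∫ t in (0:ℝ)..T, (f1 t - f2 t + f3 t - f4 t - f5 t - f6 t + f7 t))
      = (∫ t in (0:ℝ)..T, f1 t) - (∫ t in (0:ℝ)..T, f2 t) + (∫ t in (0:ℝ)..T, f3 t)
        - (∫ t in (0:ℝ)..T, f4 t) - (∫ t in (0:ℝ)..T, f5 t) - (∫ t in (0:ℝ)..T, f6 t)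
        + ∫ t in (0:ℝ)..T, f7 t := by
  have i : ∀ f : ℝ → ℝ, Continuous f → IntervalIntegrable f volume 0 T :=
    fun f hf => hf.intervalIntegrable 0 T
  rw [intervalIntegral.integral_add (by
        exact i _ (((((h1.sub h2).add h3).sub h4).sub h5).sub h6)) (i _ h7),
      intervalIntegral.integral_sub (by
        exact i _ ((((h1.sub h2).add h3).sub h4).sub h5)) (i _ h6),
      intervalIntegral.integral_sub (by
        exact i _ (((h1.sub h2).add h3).sub h4)) (i _ h5),
      intervalIntegral.integral_sub (by
        exact i _ ((h1.sub h2).add h3)) (i _ h4),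
      intervalIntegral.integral_add (by exact i _ (h1.sub h2)) (i _ h3),
      intervalIntegral.integral_sub (i _ h1) (i _ h2)]

theorem rfm_eta01_lower_bounds
    (n : ℕ) (hn : 1 ≤ n) (T : ℝ) (hT : 0 < T)
    (u : ℕ → ℝ → ℝ) (x : ℕ → ℝ → ℝ) (e : ℕ → ℝ)
    (hu_cont : ∀ i, i ≤ n → Continuous (u i))
    (hu_pos : ∀ i, i ≤ n → ∀ t, 0 < u i t)
    (hu_per : ∀ i, i ≤ n → ∀ t, u i (t + T) = u i t)
    (hx0 : ∀ t, x 0 t = 1) (hxtop : ∀ t, x (n+1) t = 0)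
    (hxdiff : ∀ i, 1 ≤ i → i ≤ n → Differentiable ℝ (x i))
    (hxper : ∀ i, 1 ≤ i → i ≤ n → ∀ t, x i (t + T) = x i t)
    (hxmem : ∀ i, 1 ≤ i → i ≤ n → ∀ t, x i t ∈ Set.Ioo (0:ℝ) 1)
    (hode : ∀ i, 1 ≤ i → i ≤ n → ∀ t,
      deriv (x i) t
        = u (i-1) t * x (i-1) t * (1 - x i t) - u i t * x i t * (1 - x (i+1) t))
    (he0 : e 0 = 1) (hetop : e (n+1) = 0)
    (hemem : ∀ i, 1 ≤ i → i ≤ n → e i ∈ Set.Ioo (0:ℝ) 1)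
    (heq : ∀ i, 1 ≤ i → i ≤ n →
      (1/T * ∫ t in (0:ℝ)..T, u (i-1) t) * e (i-1) * (1 - e i)
        = (1/T * ∫ t in (0:ℝ)..T, u i t) * e i * (1 - e (i+1))) :
    ∀ i, 1 ≤ i → i ≤ n →
      ((1/T * ∫ t in (0:ℝ)..T, u i t * (x (i+1) t - e (i+1))) * (e i)^2
          - (1/T * ∫ t in (0:ℝ)..T, u (i-1) t * (x (i-1) t - e (i-1))) * (1 - e i)^2
        ≤ 1/T * ∫ t in (0:ℝ)..T, u 0 t * (x 1 t - e 1))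
      ∧ ((1/T * ∫ t in (0:ℝ)..T, u 0 t * (x 1 t - e 1))
            = (1/T * ∫ t in (0:ℝ)..T, u i t * (x (i+1) t - e (i+1))) * (e i)^2
              - (1/T * ∫ t in (0:ℝ)..T, u (i-1) t * (x (i-1) t - e (i-1))) * (1 - e i)^2
          ↔ ∀ t, x i t = e i) := by
  have hTne : T ≠ 0 := ne_of_gt hT
  -- continuity of x j for all j ≤ n+1
  have hxc : ∀ j, j ≤ n + 1 → Continuous (x j) := by
    intro j hj
    rcases Nat.eq_zero_or_pos j with h0 | hpos
    · subst h0
      have : x 0 = fun _ => (1:ℝ) := funext hx0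
      rw [this]; exact continuous_const
    · rcases eq_or_lt_of_le hj with heq' | hlt
      · subst heq'
        have : x (n+1) = fun _ => (0:ℝ) := funext hxtop
        rw [this]; exact continuous_const
      · exact (hxdiff j hpos (Nat.lt_succ_iff.mp hlt)).continuous
  -- continuity of deriv (x j)
  have hdc : ∀ j, 1 ≤ j → j ≤ n → Continuous (deriv (x j)) := by
    intro j h1 h2
    have hrw : deriv (x j) = fun t =>
        u (j-1) t * x (j-1) t * (1 - x j t) - u j t * x j t * (1 - x (j+1) t) :=
      funext (hode j h1 h2)
    rw [hrw]
    exact (((hu_cont _ (by omega)).mul (hxc _ (by omega))).mul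
        (continuous_const.sub (hxc _ (by omega)))).sub
      (((hu_cont _ h2).mul (hxc _ (by omega))).mul
        (continuous_const.sub (hxc _ (by omega))))
  -- flux conservation
  have hflux : ∀ j, 1 ≤ j → j ≤ n →
      (∫ t in (0:ℝ)..T, u (j-1) t * x (j-1) t * (1 - x j t))
        = ∫ t in (0:ℝ)..T, u j t * x j t * (1 - x (j+1) t) := by
    intro j h1 h2
    have h0 : (∫ t in (0:ℝ)..T, deriv (x j) t) = x j T - x j 0 :=
      intervalIntegral.integral_deriv_eq_sub (fun t _ => (hxdiff j h1 h2 t))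
        ((hdc j h1 h2).intervalIntegrable 0 T)
    have hper : x j T = x j 0 := by
      have := hxper j h1 h2 0; rwa [zero_add] at this
    rw [hper, sub_self] at h0
    have hc1 : Continuous (fun t => u (j-1) t * x (j-1) t * (1 - x j t)) :=
      ((hu_cont _ (by omega)).mul (hxc _ (by omega))).mul
        (continuous_const.sub (hxc _ (by omega)))
    have hc2 : Continuous (fun t => u j t * x j t * (1 - x (j+1) t)) :=
      ((hu_cont _ h2).mul (hxc _ (by omega))).mul
        (continuous_const.sub (hxc _ (by omega)))
    have hsub : (∫ t in (0:ℝ)..T,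
        (u (j-1) t * x (j-1) t * (1 - x j t) - u j t * x j t * (1 - x (j+1) t))) = 0 := by
      refine Eq.trans ?_ h0
      apply intervalIntegral.integral_congr
      intro t _
      exact (hode j h1 h2 t).symm
    rw [intervalIntegral.integral_sub (hc1.intervalIntegrable 0 T)
      (hc2.intervalIntegrable 0 T), sub_eq_zero] at hsub
    exact hsub
  -- equilibrium flux conservation (heq scaled by T)
  have hpsi : ∀ j, 1 ≤ j → j ≤ n →
      (∫ t in (0:ℝ)..T, u (j-1) t) * (e (j-1) * (1 - e j))
        = (∫ t in (0:ℝ)..T, u j t) * (e j * (1 - e (j+1))) := by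
    intro j h1 h2
    have h := heq j h1 h2
    have h' : 1/T * ((∫ t in (0:ℝ)..T, u (j-1) t) * (e (j-1) * (1 - e j)))
        = 1/T * ((∫ t in (0:ℝ)..T, u j t) * (e j * (1 - e (j+1)))) := by
      ring_nf at h ⊢; linarith
    exact mul_left_cancel₀ (by positivity : (1:ℝ)/T ≠ 0) h'
  -- telescoping identity
  have hG : ∀ j, 1 ≤ j → j ≤ n + 1 →
      (∫ t in (0:ℝ)..T, u 0 t * (x 1 t - e 1))
        = (∫ t in (0:ℝ)..T, u (j-1) t) * (e (j-1) * (1 - e j))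
          - ∫ t in (0:ℝ)..T, u (j-1) t * x (j-1) t * (1 - x j t) := by
    intro j h1 h2
    induction j with
    | zero => omega
    | succ k ih =>
      rcases Nat.eq_zero_or_pos k with hk0 | hk1
      · subst hk0
        simp only [Nat.add_sub_cancel, Nat.zero_add, Nat.sub_self]
        have hc1 : Continuous (u 0) := hu_cont 0 (by omega)
        have hA : (∫ t in (0:ℝ)..T, u 0 t * (e 0 * (1 - e 1)))
            = (∫ t in (0:ℝ)..T, u 0 t) * (e 0 * (1 - e 1)) :=
          intervalIntegral.integral_mul_const _ _
        rw [← hA, ← intervalIntegral.integral_sub (μ := volume)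
          (f := fun t => u 0 t * (e 0 * (1 - e 1))) (g := fun t => u 0 t * x 0 t * (1 - x 1 t))
          ((hc1.mul continuous_const).intervalIntegrable 0 T)
          (((hc1.mul (hxc 0 (by omega))).mul (continuous_const.sub
            (hxc 1 (by omega)))).intervalIntegrable 0 T)]
        apply intervalIntegral.integral_congr
        intro t _
        simp only [hx0 t, he0]
        ring
      · have hk2 : k ≤ n := by omega
        have ihh := ih hk1 (by omega)
        rw [ihh]
        simp only [Nat.add_sub_cancel]
        rw [← hpsi k hk1 hk2, ← hflux k hk1 hk2]
  -- now fix i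
  intro i h1i hin
  obtain ⟨a, rfl⟩ : ∃ a, i = a + 1 := ⟨i - 1, (Nat.succ_pred_eq_of_pos h1i).symm⟩
  simp only [Nat.add_sub_cancel] at *
  set b := e (a+1) with hb
  set ea := e a with hea
  set ec := e (a+2) with hec
  -- key integrals
  set I0 := ∫ t in (0:ℝ)..T, u 0 t * (x 1 t - e 1) with hI0
  set J1 := ∫ t in (0:ℝ)..T, u a t with hJ1
  set J2 := ∫ t in (0:ℝ)..T, u a t * x a t * (1 - x (a+1) t) with hJ2
  set J3 := ∫ t in (0:ℝ)..T, u (a+1) t with hJ3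
  set J4 := ∫ t in (0:ℝ)..T, u (a+1) t * x (a+1) t * (1 - x (a+2) t) with hJ4
  set J6 := ∫ t in (0:ℝ)..T, u (a+1) t * (x (a+2) t - ec) with hJ6
  set J7 := ∫ t in (0:ℝ)..T, u a t * (x a t - ea) with hJ7
  set K := ∫ t in (0:ℝ)..T,
      (u a t * x a t + u (a+1) t * (1 - x (a+2) t)) * (x (a+1) t - b)^2 with hK
  have han : a ≤ n := by omega
  have han1 : a ≤ n + 1 := by omega
  have ha1n1 : a + 1 ≤ n + 1 := by omega
  have ha2n1 : a + 2 ≤ n + 1 := by omega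
  -- the two expressions for I0
  have hGi : I0 = J1 * (ea * (1 - b)) - J2 := hG (a+1) (by omega) (by omega)
  have hGi1 : I0 = J3 * (b * (1 - ec)) - J4 := by
    have := hG (a+2) (by omega) (by omega)
    simpa using this
  -- the z * z' integral is zero
  have hZ : (∫ t in (0:ℝ)..T, (x (a+1) t - b) * deriv (x (a+1)) t) = 0 := by
    have key : ∀ t ∈ Set.uIcc (0:ℝ) T,
        HasDerivAt (fun s => (x (a+1) s - b)^2 / 2)
          ((x (a+1) t - b) * deriv (x (a+1)) t) t := by
      intro t _
      have h1 : HasDerivAt (x (a+1)) (deriv (x (a+1)) t) t :=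
        (hxdiff (a+1) (by omega) hin t).hasDerivAt
      have h2 : HasDerivAt (fun s => x (a+1) s - b) (deriv (x (a+1)) t) t :=
        h1.sub_const _
      have h3 := (h2.pow 2).div_const 2
      exact h3.congr_deriv (by push_cast; ring)
    have hint : IntervalIntegrable (fun t => (x (a+1) t - b) * deriv (x (a+1)) t)
        volume 0 T :=
      (((hxc _ ha1n1).sub continuous_const).mul (hdc (a+1) (by omega) hin)).intervalIntegrable 0 T
    have := intervalIntegral.integral_eq_sub_of_hasDerivAt key hint
    rw [this]
    have hper : x (a+1) T = x (a+1) 0 := by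
      have := hxper (a+1) (by omega) hin 0; rwa [zero_add] at this
    rw [hper]; ring
  -- Z with the ODE rhs
  have hZ' : (∫ t in (0:ℝ)..T, (x (a+1) t - b) *
      (u a t * x a t * (1 - x (a+1) t) - u (a+1) t * x (a+1) t * (1 - x (a+2) t))) = 0 := by
    refine Eq.trans ?_ hZ
    apply intervalIntegral.integral_congr
    intro t _
    have h := hode (a+1) (by omega) hin t
    simp only [Nat.add_sub_cancel] at h
    simp only [h]
  -- master identity
  have master : K = I0 - b^2 * J6 + (1-b)^2 * J7 := by
    have cu0 : Continuous (u a) := hu_cont a han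
    have cu1 : Continuous (u (a+1)) := hu_cont (a+1) hin
    have cxa : Continuous (x a) := hxc a han1
    have cx1 : Continuous (x (a+1)) := hxc (a+1) ha1n1
    have cx2 : Continuous (x (a+2)) := hxc (a+2) ha2n1
    have split := integral_split7 (T := T)
      (fun t => ((1-b)*(ea*(1-b))) * u a t)
      (fun t => (1-b) * (u a t * x a t * (1 - x (a+1) t)))
      (fun t => (b*(b*(1-ec))) * u (a+1) t)
      (fun t => b * (u (a+1) t * x (a+1) t * (1 - x (a+2) t)))
      (fun t => (x (a+1) t - b) *
        (u a t * x a t * (1 - x (a+1) t) - u (a+1) t * x (a+1) t * (1 - x (a+2) t)))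
      (fun t => b^2 * (u (a+1) t * (x (a+2) t - ec)))
      (fun t => (1-b)^2 * (u a t * (x a t - ea)))
      (continuous_const.mul cu0)
      (continuous_const.mul ((cu0.mul cxa).mul (continuous_const.sub cx1)))
      (continuous_const.mul cu1)
      (continuous_const.mul ((cu1.mul cx1).mul (continuous_const.sub cx2)))
      ((cx1.sub continuous_const).mul (((cu0.mul cxa).mul (continuous_const.sub cx1)).sub
        ((cu1.mul cx1).mul (continuous_const.sub cx2))))
      (continuous_const.mul (cu1.mul (cx2.sub continuous_const)))
      (continuous_const.mul (cu0.mul (cxa.sub continuous_const)))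
    have hKF : K = ∫ t in (0:ℝ)..T,
        (((1-b)*(ea*(1-b))) * u a t
          - (1-b) * (u a t * x a t * (1 - x (a+1) t))
          + (b*(b*(1-ec))) * u (a+1) t
          - b * (u (a+1) t * x (a+1) t * (1 - x (a+2) t))
          - (x (a+1) t - b) *
            (u a t * x a t * (1 - x (a+1) t) - u (a+1) t * x (a+1) t * (1 - x (a+2) t))
          - b^2 * (u (a+1) t * (x (a+2) t - ec))
          + (1-b)^2 * (u a t * (x a t - ea))) := by
      rw [hK]
      apply intervalIntegral.integral_congr
      intro t _
      ring
    rw [hKF, split]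
    simp only [intervalIntegral.integral_const_mul]
    rw [hZ']
    rw [← hJ1, ← hJ2, ← hJ3, ← hJ4, ← hJ6, ← hJ7]
    linear_combination (-(1-b)) * hGi + (-b) * hGi1
  -- positivity facts about the weight
  have hw_nonneg : ∀ t, 0 ≤ u a t * x a t + u (a+1) t * (1 - x (a+2) t) := by
    intro t
    have hxa : 0 ≤ x a t := by
      rcases Nat.eq_zero_or_pos a with h0 | hpos
      · subst h0; rw [hx0 t]; norm_num
      · exact le_of_lt (hxmem a hpos (by omega) t).1
    have hx2 : x (a+2) t ≤ 1 := by
      rcases eq_or_lt_of_le ha2n1 with h0 | hlt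
      · rw [show a + 2 = n + 1 from h0, hxtop t]; norm_num
      · exact le_of_lt (hxmem (a+2) (by omega) (by omega) t).2
    have h1 := mul_nonneg (le_of_lt (hu_pos a han t)) hxa
    have h2 := mul_nonneg (le_of_lt (hu_pos (a+1) hin t)) (by linarith : (0:ℝ) ≤ 1 - x (a+2) t)
    linarith
  have hw_pos : ∀ t, 0 < u a t * x a t + u (a+1) t * (1 - x (a+2) t) := by
    intro t
    have hxa : 0 < x a t := by
      rcases Nat.eq_zero_or_pos a with h0 | hpos
      · subst h0; rw [hx0 t]; norm_num
      · exact (hxmem a hpos (by omega) t).1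
    have hx2 : x (a+2) t ≤ 1 := by
      rcases eq_or_lt_of_le ha2n1 with h0 | hlt
      · rw [show a + 2 = n + 1 from h0, hxtop t]; norm_num
      · exact le_of_lt (hxmem (a+2) (by omega) (by omega) t).2
    have h1 := mul_pos (hu_pos a han t) hxa
    have h2 := mul_nonneg (le_of_lt (hu_pos (a+1) hin t)) (by linarith : (0:ℝ) ≤ 1 - x (a+2) t)
    linarith
  have hKc : Continuous (fun t =>
      (u a t * x a t + u (a+1) t * (1 - x (a+2) t)) * (x (a+1) t - b)^2) :=
    (((hu_cont a han).mul (hxc a han1)).add ((hu_cont (a+1) hin).mul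
      (continuous_const.sub (hxc (a+2) ha2n1)))).mul
      (((hxc (a+1) ha1n1).sub continuous_const).pow 2)
  have hKnonneg : 0 ≤ K := by
    rw [hK]
    apply intervalIntegral.integral_nonneg (le_of_lt hT)
    intro t _
    exact mul_nonneg (hw_nonneg t) (sq_nonneg _)
  constructor
  · -- the inequality
    have h2 : b^2 * J6 - (1-b)^2 * J7 ≤ I0 := by linarith [master, hKnonneg]
    have h3 : 1/T * (b^2 * J6 - (1-b)^2 * J7) ≤ 1/T * I0 :=
      mul_le_mul_of_nonneg_left h2 (by positivity)
    calc (1/T * J6) * b^2 - (1/T * J7) * (1-b)^2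
        = 1/T * (b^2 * J6 - (1-b)^2 * J7) := by ring
      _ ≤ 1/T * I0 := h3
  · constructor
    · -- equality implies x i ≡ e i
      intro hEq
      have hEq' : 1/T * I0 = 1/T * (b^2 * J6 - (1-b)^2 * J7) := by
        rw [hEq]; ring
      have hI0eq : I0 = b^2 * J6 - (1-b)^2 * J7 :=
        mul_left_cancel₀ (by positivity : (1:ℝ)/T ≠ 0) hEq'
      have hK0 : K = 0 := by linarith [master]
      have hzero : ∀ t ∈ Set.Icc (0:ℝ) T, x (a+1) t = b := by
        by_contra hcon
        push_neg at hcon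
        obtain ⟨t₀, ht₀, hne⟩ := hcon
        have hpos : 0 < K := by
          rw [hK]
          apply intervalIntegral.integral_pos hT hKc.continuousOn
          · intro t _
            exact mul_nonneg (hw_nonneg t) (sq_nonneg _)
          · refine ⟨t₀, ht₀, ?_⟩
            have hz2 : 0 < (x (a+1) t₀ - b)^2 := by
              have : x (a+1) t₀ - b ≠ 0 := sub_ne_zero_of_ne hne
              positivity
            exact mul_pos (hw_pos t₀) hz2
        rw [hK0] at hpos
        exact lt_irrefl 0 hpos
      intro t
      have hper : Function.Periodic (x (a+1)) T := hxper (a+1) (by omega) hin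
      obtain ⟨y, hy, hxy⟩ := hper.exists_mem_Ico₀ hT t
      rw [hxy]
      exact hzero y ⟨hy.1, le_of_lt hy.2⟩
    · -- x i ≡ e i implies equality
      intro hid
      have hK0 : K = 0 := by
        rw [hK]
        have : (∫ t in (0:ℝ)..T,
            (u a t * x a t + u (a+1) t * (1 - x (a+2) t)) * (x (a+1) t - b)^2)
            = ∫ t in (0:ℝ)..T, (0:ℝ) := by
          apply intervalIntegral.integral_congr
          intro t _
          simp only [hid t]
          ring
        rw [this, intervalIntegral.integral_zero]
      have hI0eq : I0 = b^2 * J6 - (1-b)^2 * J7 := by linarith [master]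
      rw [hI0eq]; ring
end

section
/- For the RFM with n = 1, i.e., ẋ₁ = u₀(1 - x₁) - u₁ x₁ with continuous positive T-periodic rates u₀, u₁, let x₁ be the T-periodic solution with values in (0,1) and let e₁ = ū₀/(ū₀ + ū₁). Then the average production rate satisfies (1/T)∫₀ᵀ u₁(t) x₁(t) dt ≤ ū₁ e₁, i.e., there is no gain of entrainment. -/
open MeasureTheory intervalIntegral Real Filter

theorem rfm1_no_goe
    (T : ℝ) (hT : 0 < T) (u0 u1 x1 : ℝ → ℝ)
    (hu0c : Continuous u0) (hu1c : Continuous u1)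
    (hu0p : ∀ t, 0 < u0 t) (hu1p : ∀ t, 0 < u1 t)
    (hu0per : ∀ t, u0 (t + T) = u0 t) (hu1per : ∀ t, u1 (t + T) = u1 t)
    (hx1d : Differentiable ℝ x1) (hx1per : ∀ t, x1 (t + T) = x1 t)
    (hx1mem : ∀ t, x1 t ∈ Set.Ioo (0:ℝ) 1)
    (hode : ∀ t, deriv x1 t = u0 t * (1 - x1 t) - u1 t * x1 t) :
    1/T * ∫ t in (0:ℝ)..T, u1 t * x1 t
      ≤ (1/T * ∫ t in (0:ℝ)..T, u1 t)
        * ((1/T * ∫ t in (0:ℝ)..T, u0 t)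
            / ((1/T * ∫ t in (0:ℝ)..T, u0 t) + (1/T * ∫ t in (0:ℝ)..T, u1 t))) := by
  have hx0 : ∀ t, 0 < x1 t := fun t => (hx1mem t).1
  have hx1lt : ∀ t, 0 < 1 - x1 t := fun t => sub_pos.mpr (hx1mem t).2
  have hxne : ∀ t, (1 : ℝ) - x1 t ≠ 0 := fun t => (hx1lt t).ne'
  have hx1c : Continuous x1 := hx1d.continuous
  have hdc : Continuous (deriv x1) := by
    have h : deriv x1 = fun t => u0 t * (1 - x1 t) - u1 t * x1 t := funext hode
    rw [h]
    exact (hu0c.mul (continuous_const.sub hx1c)).sub (hu1c.mul hx1c)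
  have hxT : x1 T = x1 0 := by have := hx1per 0; rwa [zero_add] at this
  -- abbreviations
  set A := ∫ t in (0:ℝ)..T, u0 t with hAdef
  set B := ∫ t in (0:ℝ)..T, u1 t with hBdef
  set P := ∫ t in (0:ℝ)..T, u1 t * x1 t with hPdef
  set Q := ∫ t in (0:ℝ)..T, u1 t * (1 - x1 t) with hQdef
  set R := ∫ t in (0:ℝ)..T, u0 t * x1 t with hRdef
  set G := ∫ t in (0:ℝ)..T, u1 t * x1 t ^ 2 / (1 - x1 t) with hGdef
  -- continuity of the various integrands
  have hcu0x : Continuous fun t => u0 t * x1 t := hu0c.mul hx1c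
  have hcu1x : Continuous fun t => u1 t * x1 t := hu1c.mul hx1c
  have hcu1mx : Continuous fun t => u1 t * (1 - x1 t) := hu1c.mul (continuous_const.sub hx1c)
  have hcG : Continuous fun t => u1 t * x1 t ^ 2 / (1 - x1 t) :=
    (hu1c.mul (hx1c.pow 2)).div (continuous_const.sub hx1c) hxne
  -- positivity of the integrals
  have hApos : 0 < A := intervalIntegral_pos_of_pos (hu0c.intervalIntegrable 0 T) hu0p hT
  have hBpos : 0 < B := intervalIntegral_pos_of_pos (hu1c.intervalIntegrable 0 T) hu1p hT
  have hPpos : 0 < P := intervalIntegral_pos_of_pos (hcu1x.intervalIntegrable 0 T)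
    (fun t => mul_pos (hu1p t) (hx0 t)) hT
  have hQpos : 0 < Q := intervalIntegral_pos_of_pos (hcu1mx.intervalIntegrable 0 T)
    (fun t => mul_pos (hu1p t) (hx1lt t)) hT
  -- key identity 1 : ∫ deriv x1 = 0
  have key1 : (∫ t in (0:ℝ)..T, deriv x1 t) = 0 := by
    rw [intervalIntegral.integral_deriv_eq_sub (fun t _ => hx1d t)
      (hdc.intervalIntegrable 0 T), hxT, sub_self]
  -- key identity 2 : ∫ (-deriv x1)/(1 - x1) = 0  (derivative of log (1 - x1))
  have hF : ∀ t, HasDerivAt (fun s => Real.log (1 - x1 s)) ((0 - deriv x1 t) / (1 - x1 t)) t := by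
    intro t
    exact ((hasDerivAt_const t (1:ℝ)).sub (hx1d t).hasDerivAt).log (hxne t)
  have key2 : (∫ t in (0:ℝ)..T, (0 - deriv x1 t) / (1 - x1 t)) = 0 := by
    rw [intervalIntegral.integral_eq_sub_of_hasDerivAt (fun t _ => hF t)
      (((continuous_const.sub hdc).div (continuous_const.sub hx1c) hxne).intervalIntegrable 0 T),
      hxT, sub_self]
  -- key identity 3 : G = R
  have key3 : G = R := by
    have hpt : ∀ t, u1 t * x1 t ^ 2 / (1 - x1 t)
        = u0 t * x1 t + (deriv x1 t + (0 - deriv x1 t) / (1 - x1 t)) := by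
      intro t
      rw [hode t]
      field_simp [hxne t]
      ring
    have hc2 : Continuous fun t => (0 - deriv x1 t) / (1 - x1 t) :=
      (continuous_const.sub hdc).div (continuous_const.sub hx1c) hxne
    have h1 : G = ∫ t in (0:ℝ)..T, (u0 t * x1 t + (deriv x1 t + (0 - deriv x1 t) / (1 - x1 t))) :=
      intervalIntegral.integral_congr (fun t _ => hpt t)
    have h2 : (∫ t in (0:ℝ)..T, (u0 t * x1 t + (deriv x1 t + (0 - deriv x1 t) / (1 - x1 t))))
        = (∫ t in (0:ℝ)..T, u0 t * x1 t)
          + ∫ t in (0:ℝ)..T, (deriv x1 t + (0 - deriv x1 t) / (1 - x1 t)) :=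
      intervalIntegral.integral_add (hcu0x.intervalIntegrable 0 T)
        ((hdc.add hc2).intervalIntegrable 0 T)
    have h3 : (∫ t in (0:ℝ)..T, (deriv x1 t + (0 - deriv x1 t) / (1 - x1 t)))
        = (∫ t in (0:ℝ)..T, deriv x1 t)
          + ∫ t in (0:ℝ)..T, (0 - deriv x1 t) / (1 - x1 t) :=
      intervalIntegral.integral_add (hdc.intervalIntegrable 0 T) (hc2.intervalIntegrable 0 T)
    rw [h1, h2, h3, key1, key2]
    simp [hRdef]
  -- key identity 4 : A = R + P (integrate the ODE over a period)
  have keyA : A = R + P := by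
    have h0 : (∫ t in (0:ℝ)..T, (u0 t * (1 - x1 t) - u1 t * x1 t)) = 0 := by
      simp only [← hode]
      exact key1
    have h1 : (∫ t in (0:ℝ)..T, (u0 t * (1 - x1 t) - u1 t * x1 t))
        = (∫ t in (0:ℝ)..T, u0 t * (1 - x1 t)) - P := by
      rw [intervalIntegral.integral_sub (f := fun t => u0 t * (1 - x1 t)) (g := fun t => u1 t * x1 t)
        ((hu0c.mul (continuous_const.sub hx1c)).intervalIntegrable 0 T)
        (hcu1x.intervalIntegrable 0 T)]
    have h2 : (∫ t in (0:ℝ)..T, u0 t * (1 - x1 t)) = A - R := by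
      have : ∀ t, u0 t * (1 - x1 t) = u0 t - u0 t * x1 t := fun t => by ring
      rw [intervalIntegral.integral_congr (fun t _ => this t),
        intervalIntegral.integral_sub (hu0c.intervalIntegrable 0 T)
          (hcu0x.intervalIntegrable 0 T)]
    have := h0
    rw [h1, h2] at this
    linarith
  -- key identity 5 : B = Q + P
  have keyB : B = Q + P := by
    have h2 : Q = B - P := by
      have : ∀ t, u1 t * (1 - x1 t) = u1 t - u1 t * x1 t := fun t => by ring
      rw [hQdef, intervalIntegral.integral_congr (fun t _ => this t),
        intervalIntegral.integral_sub (hu1c.intervalIntegrable 0 T)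
          (hcu1x.intervalIntegrable 0 T)]
    linarith
  -- Cauchy–Schwarz via nonnegativity of a quadratic
  set l := P / Q with hldef
  have key4 : (0:ℝ) ≤ ∫ t in (0:ℝ)..T,
      (l ^ 2 * (u1 t * (1 - x1 t)) - 2 * l * (u1 t * x1 t) + u1 t * x1 t ^ 2 / (1 - x1 t)) := by
    apply intervalIntegral.integral_nonneg hT.le
    intro t _
    have h : l ^ 2 * (u1 t * (1 - x1 t)) - 2 * l * (u1 t * x1 t) + u1 t * x1 t ^ 2 / (1 - x1 t)
        = u1 t / (1 - x1 t) * (l * (1 - x1 t) - x1 t) ^ 2 := by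
      field_simp [hxne t, hQpos.ne']
      ring
    rw [h]
    have := hu1p t
    have := hx1lt t
    positivity
  have expand : (∫ t in (0:ℝ)..T,
      (l ^ 2 * (u1 t * (1 - x1 t)) - 2 * l * (u1 t * x1 t) + u1 t * x1 t ^ 2 / (1 - x1 t)))
      = l ^ 2 * Q - 2 * l * P + G := by
    have h1 : (∫ t in (0:ℝ)..T,
        (l ^ 2 * (u1 t * (1 - x1 t)) - 2 * l * (u1 t * x1 t) + u1 t * x1 t ^ 2 / (1 - x1 t)))
        = (∫ t in (0:ℝ)..T, (l ^ 2 * (u1 t * (1 - x1 t)) - 2 * l * (u1 t * x1 t)))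
          + ∫ t in (0:ℝ)..T, u1 t * x1 t ^ 2 / (1 - x1 t) :=
      intervalIntegral.integral_add
        (((continuous_const.mul hcu1mx).sub (continuous_const.mul hcu1x)).intervalIntegrable 0 T)
        (hcG.intervalIntegrable 0 T)
    have h2 : (∫ t in (0:ℝ)..T, (l ^ 2 * (u1 t * (1 - x1 t)) - 2 * l * (u1 t * x1 t)))
        = (∫ t in (0:ℝ)..T, l ^ 2 * (u1 t * (1 - x1 t)))
          - ∫ t in (0:ℝ)..T, 2 * l * (u1 t * x1 t) :=
      intervalIntegral.integral_sub ((continuous_const.mul hcu1mx).intervalIntegrable 0 T)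
        ((continuous_const.mul hcu1x).intervalIntegrable 0 T)
    rw [h1, h2, intervalIntegral.integral_const_mul, intervalIntegral.integral_const_mul]
  have key5 : P ^ 2 ≤ Q * G := by
    have h := key4
    rw [expand] at h
    have e : l ^ 2 * Q - 2 * l * P + G = G - P ^ 2 / Q := by
      rw [hldef]
      field_simp
      ring
    rw [e] at h
    have : P ^ 2 / Q ≤ G := by linarith
    calc P ^ 2 = P ^ 2 / Q * Q := by field_simp
    _ ≤ G * Q := by exact mul_le_mul_of_nonneg_right this hQpos.le
    _ = Q * G := mul_comm _ _
  -- combine : P * (A + B) ≤ A * B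
  have hmain : P * (A + B) ≤ A * B := by
    rw [key3] at key5
    nlinarith [key5, keyA, keyB]
  -- final algebra
  have hsum : (0:ℝ) < A + B := add_pos hApos hBpos
  have hre : (1/T * A) / (1/T * A + 1/T * B) = A / (A + B) := by
    have hd : (0:ℝ) < 1/T * A + 1/T * B :=
      add_pos (mul_pos (by positivity) hApos) (mul_pos (by positivity) hBpos)
    rw [div_eq_div_iff hd.ne' hsum.ne']
    ring
  rw [hre]
  have hP' : P ≤ B * (A / (A + B)) := by
    rw [mul_div_assoc', le_div_iff₀ hsum]
    nlinarith [hmain]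
  calc 1/T * P ≤ 1/T * (B * (A / (A + B))) :=
        mul_le_mul_of_nonneg_left hP' (by positivity)
  _ = 1/T * B * (A / (A + B)) := by ring
end

section
/- For the RFM with n = 1, ẋ₁ = u₀(1 - x₁) - u₁ x₁ with continuous positive T-periodic rates, let x₁ be the T-periodic solution in (0,1). The average production rate (1/T)∫₀ᵀ u₁ x₁ dt equals ū₁ ū₀/(ū₀ + ū₁) if and only if u₁(t) = (ū₁/ū₀) u₀(t) for all t ∈ [0,T). -/
open MeasureTheory intervalIntegral Real Filter

lemma rfm1_eq_zero_of_integral_eq_zero {f : ℝ → ℝ} {a b : ℝ} (hab : a < b) (hc : Continuous f)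
    (hnn : ∀ t, 0 ≤ f t) (hz : (∫ t in a..b, f t) = 0) : ∀ t ∈ Set.Icc a b, f t = 0 := by
  have hae : f =ᵐ[volume.restrict (Set.Ioc a b)] 0 := by
    rw [← intervalIntegral.integral_eq_zero_iff_of_le_of_nonneg_ae hab.le
      (Filter.Eventually.of_forall fun t => hnn t) (hc.intervalIntegrable a b)]
    exact hz
  have hIoo : Set.EqOn f 0 (Set.Ioo a b) := by
    intro t ht
    by_contra hne
    have hU : IsOpen (Set.Ioo a b ∩ {x | f x ≠ 0}) :=
      isOpen_Ioo.inter (isOpen_ne_fun hc continuous_const)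
    have hm0 : volume.restrict (Set.Ioc a b) {x | f x ≠ 0} = 0 := by
      have := ae_iff.mp hae
      simpa using this
    have hm : volume (Set.Ioo a b ∩ {x | f x ≠ 0}) = 0 := by
      have hrw : volume.restrict (Set.Ioc a b) (Set.Ioo a b ∩ {x | f x ≠ 0})
          = volume (Set.Ioo a b ∩ {x | f x ≠ 0}) := by
        rw [Measure.restrict_apply hU.measurableSet]
        congr 1
        exact Set.inter_eq_left.mpr ((Set.inter_subset_left).trans Set.Ioo_subset_Ioc_self)
      have hle : volume.restrict (Set.Ioc a b) (Set.Ioo a b ∩ {x | f x ≠ 0}) ≤ 0 := by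
        rw [← hm0]; exact measure_mono Set.inter_subset_right
      rw [← hrw]
      exact le_antisymm hle zero_le
    have hempty := (hU.measure_eq_zero_iff volume).mp hm
    have : t ∈ (∅ : Set ℝ) := hempty ▸ ⟨ht, hne⟩
    exact this
  have hcl := hIoo.closure hc continuous_const
  rw [closure_Ioo hab.ne] at hcl
  intro t ht
  exact hcl ht

theorem rfm1_equality_iff_proportional
    (T : ℝ) (hT : 0 < T) (u0 u1 x1 : ℝ → ℝ)
    (hu0c : Continuous u0) (hu1c : Continuous u1)
    (hu0p : ∀ t, 0 < u0 t) (hu1p : ∀ t, 0 < u1 t)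
    (hu0per : ∀ t, u0 (t + T) = u0 t) (hu1per : ∀ t, u1 (t + T) = u1 t)
    (hx1d : Differentiable ℝ x1) (hx1per : ∀ t, x1 (t + T) = x1 t)
    (hx1mem : ∀ t, x1 t ∈ Set.Ioo (0:ℝ) 1)
    (hode : ∀ t, deriv x1 t = u0 t * (1 - x1 t) - u1 t * x1 t) :
    (1/T * ∫ t in (0:ℝ)..T, u1 t * x1 t)
      = (1/T * ∫ t in (0:ℝ)..T, u1 t) * (1/T * ∫ t in (0:ℝ)..T, u0 t)
          / ((1/T * ∫ t in (0:ℝ)..T, u0 t) + (1/T * ∫ t in (0:ℝ)..T, u1 t))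
    ↔ ∀ t ∈ Set.Ico (0:ℝ) T,
        u1 t = ((1/T * ∫ s in (0:ℝ)..T, u1 s) / (1/T * ∫ s in (0:ℝ)..T, u0 s)) * u0 t := by
  have hT' : T ≠ 0 := hT.ne'
  have hx0 : ∀ t, 0 < x1 t := fun t => (hx1mem t).1
  have h1x : ∀ t, 0 < 1 - x1 t := fun t => sub_pos.mpr (hx1mem t).2
  have hcx : Continuous x1 := hx1d.continuous
  have hcd : Continuous (deriv x1) := by
    have : deriv x1 = fun t => u0 t * (1 - x1 t) - u1 t * x1 t := funext hode
    rw [this]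
    exact (hu0c.mul (continuous_const.sub hcx)).sub (hu1c.mul hcx)
  have hxT : x1 T = x1 0 := by simpa using hx1per 0
  set A0 := ∫ t in (0:ℝ)..T, u0 t with hA0def
  set A1 := ∫ t in (0:ℝ)..T, u1 t with hA1def
  set B := ∫ t in (0:ℝ)..T, u1 t * x1 t with hBdef
  have hA0 : 0 < A0 :=
    intervalIntegral.intervalIntegral_pos_of_pos (hu0c.intervalIntegrable 0 T) hu0p hT
  have hA1 : 0 < A1 :=
    intervalIntegral.intervalIntegral_pos_of_pos (hu1c.intervalIntegrable 0 T) hu1p hT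
  have hcg : Continuous (fun t => x1 t / (1 - x1 t)) :=
    hcx.div (continuous_const.sub hcx) fun t => (h1x t).ne'
  have hiu0 : IntervalIntegrable u0 volume 0 T := hu0c.intervalIntegrable 0 T
  have hiu1 : IntervalIntegrable u1 volume 0 T := hu1c.intervalIntegrable 0 T
  have hiu0x : IntervalIntegrable (fun t => u0 t * x1 t) volume 0 T :=
    (hu0c.mul hcx).intervalIntegrable 0 T
  have hiu1x : IntervalIntegrable (fun t => u1 t * x1 t) volume 0 T :=
    (hu1c.mul hcx).intervalIntegrable 0 T
  have hiu1g : IntervalIntegrable (fun t => u1 t * (x1 t / (1 - x1 t))) volume 0 T :=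
    (hu1c.mul hcg).intervalIntegrable 0 T
  set C := ∫ t in (0:ℝ)..T, u0 t * x1 t with hCdef
  set G := ∫ t in (0:ℝ)..T, u1 t * (x1 t / (1 - x1 t)) with hGdef
  -- identity I2: C + B = A0
  have hI2 : C + B = A0 := by
    have hfund : (∫ t in (0:ℝ)..T, deriv x1 t) = x1 T - x1 0 :=
      intervalIntegral.integral_deriv_eq_sub (fun t _ => hx1d t) (hcd.intervalIntegrable 0 T)
    have h0 : (∫ t in (0:ℝ)..T, (u0 t * (1 - x1 t) - u1 t * x1 t)) = 0 := by
      rw [show (fun t => u0 t * (1 - x1 t) - u1 t * x1 t) = deriv x1 from (funext hode).symm,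
        hfund, hxT, sub_self]
    have hsplit : (∫ t in (0:ℝ)..T, (u0 t * (1 - x1 t) - u1 t * x1 t))
        = A0 - (C + B) := by
      rw [show (fun t => u0 t * (1 - x1 t) - u1 t * x1 t)
          = fun t => u0 t - (u0 t * x1 t + u1 t * x1 t) from funext fun t => by ring]
      rw [intervalIntegral.integral_sub hiu0 (hiu0x.add hiu1x),
        intervalIntegral.integral_add hiu0x hiu1x]
    rw [hsplit] at h0
    linarith
  -- identity I1: G = A0
  have hI1 : G = A0 := by
    have hF : ∀ t : ℝ, HasDerivAt (fun s => -Real.log (1 - x1 s)) (deriv x1 t / (1 - x1 t)) t := by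
      intro t
      have h1 : HasDerivAt (fun s => 1 - x1 s) (-(deriv x1 t)) t := (hx1d t).hasDerivAt.const_sub 1
      have h2 := (Real.hasDerivAt_log (h1x t).ne').comp t h1
      have h3 := h2.neg
      have h4 : deriv x1 t / (1 - x1 t) = -((1 - x1 t)⁻¹ * -deriv x1 t) := by
        rw [div_eq_mul_inv]; ring
      exact h4 ▸ h3
    have hint : IntervalIntegrable (fun t => deriv x1 t / (1 - x1 t)) volume 0 T :=
      (hcd.div (continuous_const.sub hcx) fun t => (h1x t).ne').intervalIntegrable 0 T
    have hfund : (∫ t in (0:ℝ)..T, deriv x1 t / (1 - x1 t))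
        = -Real.log (1 - x1 T) - -Real.log (1 - x1 0) :=
      intervalIntegral.integral_eq_sub_of_hasDerivAt (fun t _ => hF t) hint
    have h0 : (∫ t in (0:ℝ)..T, deriv x1 t / (1 - x1 t)) = 0 := by
      rw [hfund, hxT]; ring
    have hcongr : (∫ t in (0:ℝ)..T, deriv x1 t / (1 - x1 t))
        = ∫ t in (0:ℝ)..T, (u0 t - u1 t * (x1 t / (1 - x1 t))) := by
      apply intervalIntegral.integral_congr
      intro t _
      simp only
      rw [hode t, div_eq_iff (h1x t).ne', sub_mul, mul_assoc,
        div_mul_cancel₀ _ (h1x t).ne']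
    rw [hcongr, intervalIntegral.integral_sub hiu0 hiu1g] at h0
    rw [hGdef]
    linarith
  constructor
  · -- forward direction
    intro heq
    have hne : (1/T * A0) + (1/T * A1) ≠ 0 := by positivity
    rw [eq_div_iff hne] at heq
    have hBval : B * (A0 + A1) = A0 * A1 := by
      have h := heq
      field_simp at h
      linarith
    set K : ℝ := A0 / (A0 + A1) with hKdef
    have hKpos : 0 < K := by positivity
    have hK1 : K < 1 := by
      rw [hKdef, div_lt_one (by linarith)]
      linarith
    have hB : B = K * A1 := by
      rw [hKdef]
      field_simp
      linarith [hBval]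
    set C2 : ℝ := ((A0 + A1) / A1)^2 with hC2def
    set φ : ℝ → ℝ := fun t => u1 t * (x1 t / (1 - x1 t) - A0/A1 - C2 * (x1 t - K)) with hφdef
    have hφ_eq : ∀ t, φ t
        = u1 t * ((x1 t - K)^2 * (A0 + A1)^2 / ((1 - x1 t) * A1^2)) := by
      intro t
      rw [hφdef, hC2def, hKdef]
      have h1 : (1 : ℝ) - x1 t ≠ 0 := (h1x t).ne'
      have h2 : A1 ≠ 0 := hA1.ne'
      have h3 : A0 + A1 ≠ 0 := by positivity
      field_simp
      ring
    have hφnn : ∀ t, 0 ≤ φ t := by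
      intro t
      rw [hφ_eq t]
      have := (hu1p t).le
      have := (h1x t)
      positivity
    have hφc : Continuous φ := by
      apply hu1c.mul
      exact (hcg.sub continuous_const).sub (continuous_const.mul (hcx.sub continuous_const))
    have hφint : (∫ t in (0:ℝ)..T, φ t) = 0 := by
      have hrw : φ = fun t => (u1 t * (x1 t / (1 - x1 t)) - (A0/A1) * u1 t)
          - (C2 * (u1 t * x1 t) - (C2 * K) * u1 t) := funext fun t => by rw [hφdef]; ring
      rw [hrw, intervalIntegral.integral_sub
          (hiu1g.sub ((hiu1.const_mul _)))
          (((hiu1x.const_mul _)).sub ((hiu1.const_mul _))),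
        intervalIntegral.integral_sub hiu1g (hiu1.const_mul _),
        intervalIntegral.integral_sub (hiu1x.const_mul _) (hiu1.const_mul _),
        intervalIntegral.integral_const_mul, intervalIntegral.integral_const_mul,
        intervalIntegral.integral_const_mul]
      rw [← hGdef, ← hBdef, ← hA1def, hI1, hB]
      field_simp
      ring
    have hzero := rfm1_eq_zero_of_integral_eq_zero hT hφc hφnn hφint
    have hxK : ∀ t ∈ Set.Icc (0:ℝ) T, x1 t = K := by
      intro t ht
      have h := hzero t ht
      rw [hφ_eq t] at h
      have h1 : (x1 t - K)^2 * (A0 + A1)^2 / ((1 - x1 t) * A1^2) = 0 :=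
        (mul_eq_zero.mp h).resolve_left (hu1p t).ne'
      have h2 : (x1 t - K)^2 * (A0 + A1)^2 = 0 := by
        have hd : (1 - x1 t) * A1^2 ≠ 0 := (mul_pos (h1x t) (pow_pos hA1 2)).ne'
        exact (div_eq_zero_iff.mp h1).resolve_right hd
      have h3 : (x1 t - K)^2 = 0 := by
        have : (A0 + A1)^2 ≠ 0 := by positivity
        exact (mul_eq_zero.mp h2).resolve_right this
      have := pow_eq_zero_iff (n := 2) (by norm_num) |>.mp h3
      linarith [this]
    have hxK2 : ∀ s ∈ Set.Ioo (-T) T, x1 s = K := by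
      intro s hs
      rcases le_or_gt 0 s with h | h
      · exact hxK s ⟨h, hs.2.le⟩
      · rw [← hx1per s]
        exact hxK (s + T) ⟨by linarith [hs.1], by linarith⟩
    intro t ht
    have hd0 : deriv x1 t = 0 := by
      have hev : x1 =ᶠ[nhds t] fun _ => K := by
        filter_upwards [isOpen_Ioo.mem_nhds
          (show t ∈ Set.Ioo (-T) T from ⟨by linarith [ht.1], ht.2⟩)] with s hs
        exact hxK2 s hs
      rw [hev.deriv_eq]
      simp
    have hodet := hode t
    rw [hd0] at hodet
    have hxt : x1 t = K := hxK t ⟨ht.1, ht.2.le⟩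
    rw [hxt] at hodet
    have hux : u1 t * A0 = A1 * u0 t := by
      rw [hKdef] at hodet
      have h3 : A0 + A1 ≠ 0 := by positivity
      field_simp at hodet
      linarith
    have hr : (1/T * A1) / (1/T * A0) = A1 / A0 := by
      field_simp
    rw [hr, div_mul_eq_mul_div, eq_div_iff hA0.ne']
    linarith
  · -- reverse direction
    intro h
    have hr : (1/T * A1) / (1/T * A0) = A1 / A0 := by field_simp
    have hEq : Set.EqOn (fun t => u1 t * x1 t) (fun t => A1/A0 * (u0 t * x1 t))
        (Set.uIcc (0:ℝ) T) := by
      intro t ht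
      rw [Set.uIcc_of_le hT.le] at ht
      rcases lt_or_eq_of_le ht.2 with h2 | h2
      · have := h t ⟨ht.1, h2⟩
        rw [hr] at this
        simp only
        rw [this]
        ring
      · have hu1T : u1 t = u1 0 := by rw [h2]; simpa using hu1per 0
        have hu0T : u0 t = u0 0 := by rw [h2]; simpa using hu0per 0
        have := h 0 ⟨le_refl 0, hT⟩
        rw [hr] at this
        simp only
        rw [hu1T, hu0T, this]
        ring
    have hB' : B = A1/A0 * C := by
      rw [hBdef, intervalIntegral.integral_congr hEq, intervalIntegral.integral_const_mul]
    have hBval : B * (A0 + A1) = A0 * A1 := by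
      have h1 : B * A0 = A1 * C := by
        rw [hB']
        field_simp
      linear_combination h1 + A1 * hI2
    have hne : (1/T * A0) + (1/T * A1) ≠ 0 := by positivity
    rw [eq_div_iff hne]
    have hT2 : (T:ℝ)^2 ≠ 0 := pow_ne_zero 2 hT'
    field_simp
    linarith [hBval]
end

section
/- Let x₁ be a T-periodic solution in (0,1) of the 1D RFM ẋ₁ = u₀(1 - x₁) - u₁ x₁ with continuous positive T-periodic rates, let e₁ = ū₀/(ū₀ + ū₁), and z₁ = x₁ - e₁. Then (1/T)∫₀ᵀ u₀ z₁ dt = (1/T)∫₀ᵀ (u₀ + u₁) z₁² dt ≥ 0, and consequently (1/T)∫₀ᵀ u₁ z₁ dt ≤ 0. -/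
open MeasureTheory intervalIntegral Real Filter

theorem rfm1_moment_identities
    (T : ℝ) (hT : 0 < T) (u0 u1 x1 : ℝ → ℝ)
    (hu0c : Continuous u0) (hu1c : Continuous u1)
    (hu0p : ∀ t, 0 < u0 t) (hu1p : ∀ t, 0 < u1 t)
    (hu0per : ∀ t, u0 (t + T) = u0 t) (hu1per : ∀ t, u1 (t + T) = u1 t)
    (hx1d : Differentiable ℝ x1) (hx1per : ∀ t, x1 (t + T) = x1 t)
    (hx1mem : ∀ t, x1 t ∈ Set.Ioo (0:ℝ) 1)
    (hode : ∀ t, deriv x1 t = u0 t * (1 - x1 t) - u1 t * x1 t) :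
    let e1 : ℝ := (1/T * ∫ t in (0:ℝ)..T, u0 t)
        / ((1/T * ∫ t in (0:ℝ)..T, u0 t) + (1/T * ∫ t in (0:ℝ)..T, u1 t))
    (1/T * ∫ t in (0:ℝ)..T, u0 t * (x1 t - e1))
        = 1/T * ∫ t in (0:ℝ)..T, (u0 t + u1 t) * (x1 t - e1)^2
    ∧ 0 ≤ 1/T * ∫ t in (0:ℝ)..T, u0 t * (x1 t - e1)
    ∧ 1/T * ∫ t in (0:ℝ)..T, u1 t * (x1 t - e1) ≤ 0 := by
  intro e1
  have hx1c : Continuous x1 := hx1d.continuous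
  set A := ∫ t in (0:ℝ)..T, u0 t with hAdef
  set B := ∫ t in (0:ℝ)..T, u1 t with hBdef
  have hA0 : 0 < A :=
    intervalIntegral.intervalIntegral_pos_of_pos (hu0c.intervalIntegrable 0 T)
      hu0p hT
  have hB0 : 0 < B :=
    intervalIntegral.intervalIntegral_pos_of_pos (hu1c.intervalIntegrable 0 T)
      hu1p hT
  have hABne : A + B ≠ 0 := by positivity
  have hTne : T ≠ 0 := ne_of_gt hT
  have he1 : e1 = A / (A + B) := by
    show (1/T*A)/((1/T*A)+(1/T*B)) = A/(A+B)
    rw [← mul_add, mul_div_mul_left _ _ (one_div_ne_zero hTne)]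
  clear_value e1
  have he1A : e1 * (A + B) = A := by rw [he1, div_mul_cancel₀ _ hABne]
  have czc : Continuous fun t => x1 t - e1 := hx1c.sub continuous_const
  have c0z : Continuous fun t => u0 t * (x1 t - e1) := hu0c.mul czc
  have c1z : Continuous fun t => u1 t * (x1 t - e1) := hu1c.mul czc
  have csz : Continuous fun t => (u0 t + u1 t) * (x1 t - e1) := (hu0c.add hu1c).mul czc
  have csz2 : Continuous fun t => (u0 t + u1 t) * (x1 t - e1)^2 :=
    (hu0c.add hu1c).mul (czc.pow 2)
  have csx : Continuous fun t => (u0 t + u1 t) * x1 t := (hu0c.add hu1c).mul hx1c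
  have cez : Continuous fun t => e1 * ((u0 t + u1 t) * (x1 t - e1)) :=
    continuous_const.mul csz
  have ces : Continuous fun t => e1 * (u0 t + u1 t) := continuous_const.mul (hu0c.add hu1c)
  have ii : ∀ {f : ℝ → ℝ}, Continuous f → IntervalIntegrable f volume 0 T :=
    fun hf => hf.intervalIntegrable 0 T
  have hdc : Continuous (deriv x1) := by
    have h : deriv x1 = fun t => u0 t * (1 - x1 t) - u1 t * x1 t := funext hode
    rw [h]; continuity
  have hx10 : x1 T = x1 0 := by simpa using hx1per 0
  have h1 : (∫ t in (0:ℝ)..T, deriv x1 t) = 0 := by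
    rw [intervalIntegral.integral_deriv_eq_sub (fun t _ => hx1d t) (ii hdc), hx10,
      sub_self]
  have h1' : (∫ t in (0:ℝ)..T, (u0 t + u1 t) * x1 t) = A := by
    have e : ∀ t ∈ Set.uIcc (0:ℝ) T,
        deriv x1 t = u0 t - (u0 t + u1 t) * x1 t := fun t _ => by rw [hode t]; ring
    rw [intervalIntegral.integral_congr e,
      intervalIntegral.integral_sub (ii hu0c) (ii csx)] at h1
    linarith
  have hz0 : (∫ t in (0:ℝ)..T, (u0 t + u1 t) * (x1 t - e1)) = 0 := by
    have e : ∀ t ∈ Set.uIcc (0:ℝ) T,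
        (u0 t + u1 t) * (x1 t - e1)
          = (u0 t + u1 t) * x1 t - e1 * (u0 t + u1 t) := fun t _ => by ring
    rw [intervalIntegral.integral_congr e,
      intervalIntegral.integral_sub (ii csx) (ii ces),
      intervalIntegral.integral_const_mul,
      intervalIntegral.integral_add (ii hu0c) (ii hu1c), h1']
    linarith
  have h2 : (∫ t in (0:ℝ)..T, (x1 t - e1) * deriv x1 t) = 0 := by
    have hg : ∀ t ∈ Set.uIcc (0:ℝ) T,
        HasDerivAt (fun s => (x1 s - e1)^2) (2 * ((x1 t - e1) * deriv x1 t)) t := by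
      intro t _
      have hder : HasDerivAt (fun s => x1 s - e1) (deriv x1 t) t :=
        ((hx1d t).hasDerivAt).sub_const e1
      have h : HasDerivAt (fun s => (x1 s - e1)^2)
          (((2:ℕ):ℝ) * (x1 t - e1) ^ (2 - 1) * deriv x1 t) t := hder.pow 2
      convert h using 1
      norm_num
      ring
    have h0 := intervalIntegral.integral_eq_sub_of_hasDerivAt hg
      (ii (continuous_const.mul (czc.mul hdc)))
    rw [hx10, sub_self, intervalIntegral.integral_const_mul] at h0
    linarith
  have key : (∫ t in (0:ℝ)..T, u0 t * (x1 t - e1))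
      = ∫ t in (0:ℝ)..T, (u0 t + u1 t) * (x1 t - e1)^2 := by
    have e : ∀ t ∈ Set.uIcc (0:ℝ) T,
        (x1 t - e1) * deriv x1 t
          = u0 t * (x1 t - e1) - (u0 t + u1 t) * (x1 t - e1)^2
            - e1 * ((u0 t + u1 t) * (x1 t - e1)) := fun t _ => by
      rw [hode t]; ring
    rw [intervalIntegral.integral_congr e,
      intervalIntegral.integral_sub ((ii c0z).sub (ii csz2)) (ii cez),
      intervalIntegral.integral_sub (ii c0z) (ii csz2),
      intervalIntegral.integral_const_mul, hz0] at h2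
    linarith
  have hnn : 0 ≤ ∫ t in (0:ℝ)..T, (u0 t + u1 t) * (x1 t - e1)^2 :=
    intervalIntegral.integral_nonneg hT.le fun t _ => by
      have := hu0p t; have := hu1p t; positivity
  have hTinv : (0:ℝ) ≤ 1/T := by positivity
  refine ⟨by rw [key], ?_, ?_⟩
  · rw [key]; exact mul_nonneg hTinv hnn
  · have h3 : (∫ t in (0:ℝ)..T, u1 t * (x1 t - e1))
        = - ∫ t in (0:ℝ)..T, u0 t * (x1 t - e1) := by
      have e : ∀ t ∈ Set.uIcc (0:ℝ) T,
          u1 t * (x1 t - e1)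
            = (u0 t + u1 t) * (x1 t - e1) - u0 t * (x1 t - e1) := fun t _ => by ring
      rw [intervalIntegral.integral_congr e,
        intervalIntegral.integral_sub (ii csz) (ii c0z), hz0]
      ring
    rw [h3, key]
    have := mul_nonneg hTinv hnn
    linarith
end

section
/- Consider the RFM on n sites with continuous positive T-periodic rates and T-periodic solution x in (0,1)ⁿ, averaged equilibrium e, zᵢ = xᵢ - eᵢ, and moments η_{i,j} = (1/T)∫₀ᵀ uᵢ zⱼ dt. If η_{1,2} ≥ 0 or η_{n-1,n-1} ≤ 0, then there is no gain of entrainment: R_P ≤ R_C. -/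
open MeasureTheory intervalIntegral Real Filter

private lemma per_int_zero (T : ℝ) (f g : ℝ → ℝ)
    (hf : ∀ t, HasDerivAt f (g t) t) (hg : Continuous g)
    (hper : f T = f 0) : ∫ t in (0:ℝ)..T, g t = 0 := by
  rw [intervalIntegral.integral_eq_sub_of_hasDerivAt (fun t _ => hf t)
    (hg.intervalIntegrable _ _), hper, sub_self]

theorem rfm_no_goe_of_moment_signs
    (n : ℕ) (hn : 1 ≤ n) (T : ℝ) (hT : 0 < T)
    (u : ℕ → ℝ → ℝ) (x : ℕ → ℝ → ℝ) (e : ℕ → ℝ)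
    (hu_cont : ∀ i, i ≤ n → Continuous (u i))
    (hu_pos : ∀ i, i ≤ n → ∀ t, 0 < u i t)
    (hu_per : ∀ i, i ≤ n → ∀ t, u i (t + T) = u i t)
    (hx0 : ∀ t, x 0 t = 1) (hxtop : ∀ t, x (n+1) t = 0)
    (hxdiff : ∀ i, 1 ≤ i → i ≤ n → Differentiable ℝ (x i))
    (hxper : ∀ i, 1 ≤ i → i ≤ n → ∀ t, x i (t + T) = x i t)
    (hxmem : ∀ i, 1 ≤ i → i ≤ n → ∀ t, x i t ∈ Set.Ioo (0:ℝ) 1)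
    (hode : ∀ i, 1 ≤ i → i ≤ n → ∀ t,
      deriv (x i) t
        = u (i-1) t * x (i-1) t * (1 - x i t) - u i t * x i t * (1 - x (i+1) t))
    (he0 : e 0 = 1) (hetop : e (n+1) = 0)
    (hemem : ∀ i, 1 ≤ i → i ≤ n → e i ∈ Set.Ioo (0:ℝ) 1)
    (heq : ∀ i, 1 ≤ i → i ≤ n →
      (1/T * ∫ t in (0:ℝ)..T, u (i-1) t) * e (i-1) * (1 - e i)
        = (1/T * ∫ t in (0:ℝ)..T, u i t) * e i * (1 - e (i+1)))
    (hsign : 0 ≤ 1/T * ∫ t in (0:ℝ)..T, u 1 t * (x 2 t - e 2)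
      ∨ (1/T * ∫ t in (0:ℝ)..T, u (n-1) t * (x (n-1) t - e (n-1))) ≤ 0) :
    1/T * ∫ t in (0:ℝ)..T, u n t * x n t ≤ (1/T * ∫ t in (0:ℝ)..T, u n t) * e n := by
  have hTne : T ≠ 0 := ne_of_gt hT
  have hTinv : (0:ℝ) < 1/T := by positivity
  -- continuity of each x i
  have hxc : ∀ i, i ≤ n + 1 → Continuous (x i) := by
    intro i hi
    rcases Nat.eq_zero_or_pos i with h0 | h1
    · subst h0
      have : x 0 = fun _ => (1:ℝ) := funext hx0
      rw [this]; exact continuous_const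
    · rcases eq_or_lt_of_le hi with htop | hlt
      · subst htop
        have : x (n+1) = fun _ => (0:ℝ) := funext hxtop
        rw [this]; exact continuous_const
      · exact (hxdiff i h1 (Nat.lt_succ_iff.mp hlt)).continuous
  -- x i is T-periodic at endpoints
  have hxT : ∀ i, i ≤ n + 1 → x i T = x i 0 := by
    intro i hi
    rcases Nat.eq_zero_or_pos i with h0 | h1
    · subst h0; rw [hx0, hx0]
    · rcases eq_or_lt_of_le hi with htop | hlt
      · subst htop; rw [hxtop, hxtop]
      · have := hxper i h1 (Nat.lt_succ_iff.mp hlt) 0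
        rwa [zero_add] at this
  -- ODE as HasDerivAt
  have hD : ∀ i, 1 ≤ i → i ≤ n → ∀ t, HasDerivAt (x i)
      (u (i-1) t * x (i-1) t * (1 - x i t) - u i t * x i t * (1 - x (i+1) t)) t := by
    intro i h1 h2 t
    have h := ((hxdiff i h1 h2) t).hasDerivAt
    rwa [hode i h1 h2 t] at h
  -- continuity of the flux terms
  have hcA : ∀ i, i ≤ n → Continuous (fun t => u i t * x i t * (1 - x (i+1) t)) := by
    intro i hi
    exact ((hu_cont i hi).mul (hxc i (hi.trans (Nat.le_succ n)))).mul
      (continuous_const.sub (hxc (i+1) (Nat.succ_le_succ hi)))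
  have hcA' : ∀ i, 1 ≤ i → i ≤ n → Continuous (fun t => u (i-1) t * x (i-1) t * (1 - x i t)) := by
    intro i h1 h2
    have h := hcA (i-1) ((Nat.sub_le i 1).trans h2)
    have hii : i - 1 + 1 = i := by omega
    rwa [hii] at h
  -- flux equality at each site
  have hS1 : ∀ i, 1 ≤ i → i ≤ n →
      (∫ t in (0:ℝ)..T, u (i-1) t * x (i-1) t * (1 - x i t))
        = ∫ t in (0:ℝ)..T, u i t * x i t * (1 - x (i+1) t) := by
    intro i h1 h2
    have h0 := per_int_zero T (x i) _ (hD i h1 h2)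
      ((hcA' i h1 h2).sub (hcA i h2)) (hxT i (h2.trans (Nat.le_succ n)))
    rw [intervalIntegral.integral_sub ((hcA' i h1 h2).intervalIntegrable _ _)
      ((hcA i h2).intervalIntegrable _ _)] at h0
    exact sub_eq_zero.mp h0
  -- chain of flux equalities
  have chain : ∀ i, i ≤ n → (∫ t in (0:ℝ)..T, u 0 t * x 0 t * (1 - x 1 t))
      = ∫ t in (0:ℝ)..T, u i t * x i t * (1 - x (i+1) t) := by
    intro i
    induction i with
    | zero => intro _; rfl
    | succ j ih =>
      intro hj
      rw [ih (Nat.le_of_succ_le hj)]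
      have h := hS1 (j+1) (Nat.succ_le_succ (Nat.zero_le j)) hj
      simpa using h
  -- R_P expressed via the first flux
  have hRPA : (∫ t in (0:ℝ)..T, u n t * x n t) = ∫ t in (0:ℝ)..T, u 0 t * (1 - x 1 t) := by
    have h := chain n le_rfl
    have h1 : (∫ t in (0:ℝ)..T, u 0 t * x 0 t * (1 - x 1 t))
        = ∫ t in (0:ℝ)..T, u 0 t * (1 - x 1 t) :=
      intervalIntegral.integral_congr (fun t _ => by rw [hx0 t]; ring)
    have h2 : (∫ t in (0:ℝ)..T, u n t * x n t * (1 - x (n+1) t))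
        = ∫ t in (0:ℝ)..T, u n t * x n t :=
      intervalIntegral.integral_congr (fun t _ => by rw [hxtop t]; ring)
    rw [← h2, ← h, h1]
  -- chain of equilibrium equations
  have wchain : ∀ i, i ≤ n → (1/T * ∫ t in (0:ℝ)..T, u 0 t) * e 0 * (1 - e 1)
      = (1/T * ∫ t in (0:ℝ)..T, u i t) * e i * (1 - e (i+1)) := by
    intro i
    induction i with
    | zero => intro _; rfl
    | succ j ih =>
      intro hj
      rw [ih (Nat.le_of_succ_le hj)]
      have h := heq (j+1) (Nat.succ_le_succ (Nat.zero_le j)) hj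
      simpa using h
  have hRC : (1/T * ∫ t in (0:ℝ)..T, u n t) * e n
      = (1/T * ∫ t in (0:ℝ)..T, u 0 t) * (1 - e 1) := by
    have h := wchain n le_rfl
    rw [he0, hetop] at h
    simp only [mul_one, sub_zero] at h
    exact h.symm
  have II : ∀ {f : ℝ → ℝ}, Continuous f → IntervalIntegrable f MeasureTheory.volume 0 T :=
    fun h => h.intervalIntegrable 0 T
  rcases hsign with h | h
  · -- Case 1: η₁₂ ≥ 0, work at site 1
    have hu0c := hu_cont 0 (Nat.zero_le n)
    have hu1c := hu_cont 1 hn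
    have hx1c := hxc 1 (by omega)
    have hx2c := hxc 2 (by omega)
    have hx1 : ∀ t, x 1 t ∈ Set.Ioo (0:ℝ) 1 := hxmem 1 le_rfl hn
    have hx1ne : ∀ t, x 1 t ≠ 0 := fun t => ne_of_gt (hx1 t).1
    have hdm := hemem 1 le_rfl hn
    -- key identity from ∫ d/dt log(x₁) = 0
    have hg1d : ∀ t, HasDerivAt (fun t => Real.log (x 1 t))
        ((x 1 t)⁻¹ * (u 0 t * x 0 t * (1 - x 1 t) - u 1 t * x 1 t * (1 - x 2 t))) t := by
      intro t
      exact (Real.hasDerivAt_log (hx1ne t)).comp t (hD 1 le_rfl hn t)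
    have hg1c : Continuous (fun t =>
        (x 1 t)⁻¹ * (u 0 t * x 0 t * (1 - x 1 t) - u 1 t * x 1 t * (1 - x 2 t))) := by
      exact (hx1c.inv₀ hx1ne).mul
        (((hu0c.mul (hxc 0 (Nat.zero_le _))).mul (continuous_const.sub hx1c)).sub
          ((hu1c.mul hx1c).mul (continuous_const.sub hx2c)))
    have hI0 := per_int_zero T (fun t => Real.log (x 1 t)) _ hg1d hg1c
      (congrArg Real.log (hxT 1 (by omega)))
    have hcB1 : Continuous (fun t => u 0 t * ((1 - x 1 t) / x 1 t)) :=
      hu0c.mul ((continuous_const.sub hx1c).div hx1c hx1ne)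
    have hcB2 : Continuous (fun t => u 1 t * (1 - x 2 t)) :=
      hu1c.mul (continuous_const.sub hx2c)
    have hI3 : (∫ t in (0:ℝ)..T, u 0 t * ((1 - x 1 t) / x 1 t))
        = ∫ t in (0:ℝ)..T, u 1 t * (1 - x 2 t) := by
      have he' : Set.EqOn (fun t =>
          (x 1 t)⁻¹ * (u 0 t * x 0 t * (1 - x 1 t) - u 1 t * x 1 t * (1 - x 2 t)))
          (fun t => u 0 t * ((1 - x 1 t) / x 1 t) - u 1 t * (1 - x 2 t))
          (Set.uIcc (0:ℝ) T) := by
        intro t _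
        have hne := hx1ne t
        beta_reduce
        rw [hx0 t]
        field_simp
      rw [intervalIntegral.integral_congr he'] at hI0
      rw [intervalIntegral.integral_sub (II hcB1) (II hcB2)] at hI0
      exact sub_eq_zero.mp hI0
    -- hypothesis: η₁₂ ≥ 0 unscaled
    have hI : 0 ≤ ∫ t in (0:ℝ)..T, u 1 t * (x 2 t - e 2) := by
      by_contra hc
      push_neg at hc
      have : 1/T * ∫ t in (0:ℝ)..T, u 1 t * (x 2 t - e 2) < 0 :=
        mul_neg_of_pos_of_neg hTinv hc
      linarith
    have hBle : (∫ t in (0:ℝ)..T, u 1 t * (1 - x 2 t))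
        ≤ (1 - e 2) * ∫ t in (0:ℝ)..T, u 1 t := by
      have hsplit : (∫ t in (0:ℝ)..T, u 1 t * (1 - x 2 t))
          = (∫ t in (0:ℝ)..T, (1 - e 2) * u 1 t)
            - ∫ t in (0:ℝ)..T, u 1 t * (x 2 t - e 2) := by
        rw [← intervalIntegral.integral_sub (II (show Continuous (fun t => (1 - e 2) * u 1 t) from continuous_const.mul hu1c))
          (II (show Continuous (fun t => u 1 t * (x 2 t - e 2)) from hu1c.mul (hx2c.sub continuous_const)))]
        exact intervalIntegral.integral_congr (fun t _ => by ring)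
      rw [hsplit, intervalIntegral.integral_const_mul]
      linarith
    -- equilibrium at site 1, unscaled
    have heq1 : (∫ t in (0:ℝ)..T, u 0 t) * (1 - e 1)
        = (∫ t in (0:ℝ)..T, u 1 t) * e 1 * (1 - e 2) := by
      have h1 := heq 1 le_rfl hn
      rw [he0] at h1
      have h2 : 1/T * ((∫ t in (0:ℝ)..T, u 0 t) * (1 - e 1))
          = 1/T * ((∫ t in (0:ℝ)..T, u 1 t) * e 1 * (1 - e 2)) := by
        linear_combination h1
      exact mul_left_cancel₀ (one_div_ne_zero hTne) h2
    -- pointwise convexity inequality integrated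
    have hmono : (∫ t in (0:ℝ)..T, u 0 t * ((1 + 2*e 1 - (e 1)^2) - 2 * x 1 t))
        ≤ ∫ t in (0:ℝ)..T, u 0 t * ((1 - x 1 t) + (e 1)^2 * ((1 - x 1 t) / x 1 t)) := by
      apply intervalIntegral.integral_mono_on hT.le
        (II (hu0c.mul (continuous_const.sub (continuous_const.mul hx1c))))
        (II (hu0c.mul ((continuous_const.sub hx1c).add
          (continuous_const.mul ((continuous_const.sub hx1c).div hx1c hx1ne)))))
      intro t _
      set s := x 1 t with hs
      set d := e 1 with hd
      have hs0 : 0 < s := (hx1 t).1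
      have hs1 : s < 1 := (hx1 t).2
      have hup : 0 < u 0 t := hu_pos 0 (Nat.zero_le n) t
      have hkey : ((1-s) + d^2*((1-s)/s)) - ((1+2*d-d^2) - 2*s) = (s-d)^2/s := by
        field_simp
        ring
      have hinner : (1+2*d-d^2) - 2*s ≤ (1-s) + d^2*((1-s)/s) := by
        have := div_nonneg (sq_nonneg (s-d)) hs0.le
        linarith
      calc u 0 t * ((1 + 2*d - d^2) - 2*s)
          ≤ u 0 t * ((1-s) + d^2*((1-s)/s)) := by
            exact mul_le_mul_of_nonneg_left hinner hup.le
        _ = u 0 t * ((1-s) + d^2*((1-s)/s)) := rfl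
    -- expand both sides of hmono
    have hL : (∫ t in (0:ℝ)..T, u 0 t * ((1 + 2*e 1 - (e 1)^2) - 2 * x 1 t))
        = (1 + 2*e 1 - (e 1)^2) * (∫ t in (0:ℝ)..T, u 0 t)
          - 2 * ∫ t in (0:ℝ)..T, u 0 t * x 1 t := by
      rw [show (fun t => u 0 t * ((1 + 2*e 1 - (e 1)^2) - 2 * x 1 t))
          = fun t => (1 + 2*e 1 - (e 1)^2) * u 0 t - 2 * (u 0 t * x 1 t) from
          funext fun t => by ring]
      rw [intervalIntegral.integral_sub (II (show Continuous (fun t => (1 + 2*e 1 - (e 1)^2) * u 0 t) from continuous_const.mul hu0c))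
        (II (show Continuous (fun t => 2 * (u 0 t * x 1 t)) from continuous_const.mul (hu0c.mul hx1c))),
        intervalIntegral.integral_const_mul, intervalIntegral.integral_const_mul]
    have hR : (∫ t in (0:ℝ)..T, u 0 t * ((1 - x 1 t) + (e 1)^2 * ((1 - x 1 t) / x 1 t)))
        = (∫ t in (0:ℝ)..T, u 0 t * (1 - x 1 t))
          + (e 1)^2 * ∫ t in (0:ℝ)..T, u 0 t * ((1 - x 1 t) / x 1 t) := by
      rw [show (fun t => u 0 t * ((1 - x 1 t) + (e 1)^2 * ((1 - x 1 t) / x 1 t)))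
          = fun t => u 0 t * (1 - x 1 t) + (e 1)^2 * (u 0 t * ((1 - x 1 t) / x 1 t)) from
          funext fun t => by ring]
      rw [intervalIntegral.integral_add (II (show Continuous (fun t => u 0 t * (1 - x 1 t)) from hu0c.mul (continuous_const.sub hx1c)))
        (II (show Continuous (fun t => (e 1)^2 * (u 0 t * ((1 - x 1 t) / x 1 t))) from continuous_const.mul hcB1)), intervalIntegral.integral_const_mul]
    have hVx : (∫ t in (0:ℝ)..T, u 0 t * x 1 t)
        = (∫ t in (0:ℝ)..T, u 0 t) - ∫ t in (0:ℝ)..T, u 0 t * (1 - x 1 t) := by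
      rw [← intervalIntegral.integral_sub (II hu0c) (II (show Continuous (fun t => u 0 t * (1 - x 1 t)) from hu0c.mul (continuous_const.sub hx1c)))]
      exact intervalIntegral.integral_congr (fun t _ => by ring)
    -- put it together: A ≤ V (1 - e 1)
    set V := ∫ t in (0:ℝ)..T, u 0 t with hV
    set A := ∫ t in (0:ℝ)..T, u 0 t * (1 - x 1 t) with hA
    set B := ∫ t in (0:ℝ)..T, u 0 t * ((1 - x 1 t) / x 1 t) with hB
    set U1 := ∫ t in (0:ℝ)..T, u 1 t with hU1
    rw [hL, hR, hVx] at hmono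
    rw [hI3] at hmono
    have hB2 : (e 1)^2 * (∫ t in (0:ℝ)..T, u 1 t * (1 - x 2 t))
        ≤ (e 1)^2 * ((1 - e 2) * U1) :=
      mul_le_mul_of_nonneg_left hBle (sq_nonneg _)
    have haux : (e 1)^2 * ((1 - e 2) * U1) = e 1 * (V * (1 - e 1)) := by
      linear_combination (-(e 1)) * heq1
    have hAV : A ≤ V * (1 - e 1) := by linarith [hmono, hB2, haux, hdm.1, hdm.2]
    rw [hRPA, hRC]
    calc 1/T * A ≤ 1/T * (V * (1 - e 1)) := mul_le_mul_of_nonneg_left hAV hTinv.le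
      _ = (1/T * V) * (1 - e 1) := by ring
  · -- Case 2: η_{n-1,n-1} ≤ 0, work at site n
    have hunc := hu_cont n le_rfl
    have hun1c := hu_cont (n-1) (Nat.sub_le n 1)
    have hxnc := hxc n (Nat.le_succ n)
    have hxn1c := hxc (n-1) (by omega)
    have hxn : ∀ t, x n t ∈ Set.Ioo (0:ℝ) 1 := hxmem n hn le_rfl
    have hxnne : ∀ t, (1 - x n t) ≠ 0 := fun t => ne_of_gt (by linarith [(hxn t).2])
    have hcm := hemem n hn le_rfl
    -- key identity from ∫ d/dt log(1 - xₙ) = 0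
    have hg2d : ∀ t, HasDerivAt (fun t => Real.log (1 - x n t))
        ((1 - x n t)⁻¹ * -(u (n-1) t * x (n-1) t * (1 - x n t) - u n t * x n t * (1 - x (n+1) t))) t := by
      intro t
      have h1 : HasDerivAt (fun t => 1 - x n t)
          (-(u (n-1) t * x (n-1) t * (1 - x n t) - u n t * x n t * (1 - x (n+1) t))) t :=
        (hD n hn le_rfl t).const_sub 1
      exact (Real.hasDerivAt_log (hxnne t)).comp t h1
    have hg2c : Continuous (fun t =>
        (1 - x n t)⁻¹ * -(u (n-1) t * x (n-1) t * (1 - x n t) - u n t * x n t * (1 - x (n+1) t))) :=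
      ((continuous_const.sub hxnc).inv₀ hxnne).mul (((hcA' n hn le_rfl).sub (hcA n le_rfl)).neg)
    have hI0 := per_int_zero T (fun t => Real.log (1 - x n t)) _ hg2d hg2c
      (show Real.log (1 - x n T) = Real.log (1 - x n 0) by rw [hxT n (Nat.le_succ n)])
    have hcD : Continuous (fun t => u n t * (x n t / (1 - x n t))) :=
      hunc.mul (hxnc.div (continuous_const.sub hxnc) hxnne)
    have hcQ : Continuous (fun t => u (n-1) t * x (n-1) t) := hun1c.mul hxn1c
    have hQD : (∫ t in (0:ℝ)..T, u n t * (x n t / (1 - x n t)))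
        = ∫ t in (0:ℝ)..T, u (n-1) t * x (n-1) t := by
      have he' : Set.EqOn (fun t =>
          (1 - x n t)⁻¹ * -(u (n-1) t * x (n-1) t * (1 - x n t) - u n t * x n t * (1 - x (n+1) t)))
          (fun t => u n t * (x n t / (1 - x n t)) - u (n-1) t * x (n-1) t)
          (Set.uIcc (0:ℝ) T) := by
        intro t _
        have hne := hxnne t
        beta_reduce
        rw [hxtop t]
        field_simp
        ring
      rw [intervalIntegral.integral_congr he'] at hI0
      rw [intervalIntegral.integral_sub (II hcD) (II hcQ)] at hI0
      exact sub_eq_zero.mp hI0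
    -- hypothesis unscaled
    have hI : (∫ t in (0:ℝ)..T, u (n-1) t * (x (n-1) t - e (n-1))) ≤ 0 := by
      by_contra hc
      push_neg at hc
      have : 0 < 1/T * ∫ t in (0:ℝ)..T, u (n-1) t * (x (n-1) t - e (n-1)) :=
        mul_pos hTinv hc
      linarith
    have hQle : (∫ t in (0:ℝ)..T, u (n-1) t * x (n-1) t)
        ≤ e (n-1) * ∫ t in (0:ℝ)..T, u (n-1) t := by
      have hsplit : (∫ t in (0:ℝ)..T, u (n-1) t * x (n-1) t)
          = (∫ t in (0:ℝ)..T, e (n-1) * u (n-1) t)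
            + ∫ t in (0:ℝ)..T, u (n-1) t * (x (n-1) t - e (n-1)) := by
        rw [← intervalIntegral.integral_add (II (show Continuous (fun t => e (n-1) * u (n-1) t) from continuous_const.mul hun1c))
          (II (show Continuous (fun t => u (n-1) t * (x (n-1) t - e (n-1))) from hun1c.mul (hxn1c.sub continuous_const)))]
        exact intervalIntegral.integral_congr (fun t _ => by ring)
      rw [hsplit, intervalIntegral.integral_const_mul]
      linarith
    -- equilibrium at site n, unscaled
    have heqn : (∫ t in (0:ℝ)..T, u (n-1) t) * e (n-1) * (1 - e n)
        = (∫ t in (0:ℝ)..T, u n t) * e n := by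
      have h1 := heq n hn le_rfl
      rw [hetop] at h1
      have h2 : 1/T * ((∫ t in (0:ℝ)..T, u (n-1) t) * e (n-1) * (1 - e n))
          = 1/T * ((∫ t in (0:ℝ)..T, u n t) * e n) := by
        linear_combination h1
      exact mul_left_cancel₀ (one_div_ne_zero hTne) h2
    -- pointwise convexity inequality integrated
    have hmono : (∫ t in (0:ℝ)..T, (2 * (u n t * x n t) - (e n)^2 * u n t))
        ≤ ∫ t in (0:ℝ)..T, (u n t * x n t + (1 - e n)^2 * (u n t * (x n t / (1 - x n t)))) := by
      apply intervalIntegral.integral_mono_on hT.le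
        (II ((continuous_const.mul (hunc.mul hxnc)).sub (continuous_const.mul hunc)))
        (II ((hunc.mul hxnc).add (continuous_const.mul hcD)))
      intro t _
      set s := x n t with hs
      set c := e n with hc
      have hs0 : 0 < s := (hxn t).1
      have hs1 : (0:ℝ) < 1 - s := by linarith [(hxn t).2]
      have hup : 0 < u n t := hu_pos n le_rfl t
      have hkey : (s + (1-c)^2*(s/(1-s))) - (2*s - c^2) = (s-c)^2/(1-s) := by
        field_simp
        ring
      have hinner : 2*s - c^2 ≤ s + (1-c)^2*(s/(1-s)) := by
        have := div_nonneg (sq_nonneg (s-c)) hs1.le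
        linarith
      have hmul := mul_le_mul_of_nonneg_left hinner hup.le
      calc 2 * (u n t * s) - c^2 * u n t = u n t * (2*s - c^2) := by ring
        _ ≤ u n t * (s + (1-c)^2*(s/(1-s))) := hmul
        _ = u n t * s + (1-c)^2 * (u n t * (s/(1-s))) := by ring
    -- expand both sides
    have hL : (∫ t in (0:ℝ)..T, (2 * (u n t * x n t) - (e n)^2 * u n t))
        = 2 * (∫ t in (0:ℝ)..T, u n t * x n t) - (e n)^2 * ∫ t in (0:ℝ)..T, u n t := by
      rw [intervalIntegral.integral_sub (II (show Continuous (fun t => 2 * (u n t * x n t)) from continuous_const.mul (hunc.mul hxnc)))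
        (II (show Continuous (fun t => (e n)^2 * u n t) from continuous_const.mul hunc)),
        intervalIntegral.integral_const_mul, intervalIntegral.integral_const_mul]
    have hR : (∫ t in (0:ℝ)..T, (u n t * x n t + (1 - e n)^2 * (u n t * (x n t / (1 - x n t)))))
        = (∫ t in (0:ℝ)..T, u n t * x n t)
          + (1 - e n)^2 * ∫ t in (0:ℝ)..T, u n t * (x n t / (1 - x n t)) := by
      rw [intervalIntegral.integral_add (II (show Continuous (fun t => u n t * x n t) from hunc.mul hxnc)) (II (show Continuous (fun t => (1 - e n)^2 * (u n t * (x n t / (1 - x n t)))) from continuous_const.mul hcD)),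
        intervalIntegral.integral_const_mul]
    set P := ∫ t in (0:ℝ)..T, u n t * x n t with hP
    set U := ∫ t in (0:ℝ)..T, u n t with hU
    set Q := ∫ t in (0:ℝ)..T, u (n-1) t * x (n-1) t with hQ
    set U1 := ∫ t in (0:ℝ)..T, u (n-1) t with hU1
    rw [hL, hR, hQD] at hmono
    have hQ2 : (1 - e n)^2 * Q ≤ (1 - e n)^2 * (e (n-1) * U1) :=
      mul_le_mul_of_nonneg_left hQle (sq_nonneg _)
    have haux : (1 - e n)^2 * (e (n-1) * U1) = (1 - e n) * (U * e n) := by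
      linear_combination (1 - e n) * heqn
    have hPU : P ≤ U * e n := by linarith [hmono, hQ2, haux, hcm.1, hcm.2]
    calc 1/T * P ≤ 1/T * (U * e n) := mul_le_mul_of_nonneg_left hPU hTinv.le
      _ = (1/T * U) * e n := by ring
end

section
/- Let n be even, and consider the RFM with continuous positive T-periodic rates such that for every i ∈ {0,2,…,n-2} there exists αᵢ > 0 with uᵢ(t) = αᵢ u_{i+1}(t) for all t. Then there is no gain of entrainment: R_P ≤ R_C. -/
open MeasureTheory intervalIntegral Real Filter

lemma rfm_contInt {f : ℝ → ℝ} (hf : Continuous f) (a b : ℝ) :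
    IntervalIntegrable f volume a b := hf.intervalIntegrable a b

lemma rfm_key (T : ℝ) (hT : 0 < T) (a b x : ℝ → ℝ)
    (ha : Continuous a) (hb : Continuous b)
    (hbpos : ∀ t, 0 ≤ b t)
    (hxd : Differentiable ℝ x) (hxm : ∀ t, x t ∈ Set.Ioo (0:ℝ) 1)
    (hxp : x T = x 0)
    (hode : ∀ t, deriv x t = a t * (1 - x t) - b t * x t) :
    (∫ t in (0:ℝ)..T, b t * x t) * (∫ t in (0:ℝ)..T, a t)
      ≤ (∫ t in (0:ℝ)..T, a t * x t) * (∫ t in (0:ℝ)..T, b t) := by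
  have hxc : Continuous x := hxd.continuous
  have h1x : ∀ t, (0:ℝ) < 1 - x t := fun t => by have := (hxm t).2; linarith
  have h1xne : ∀ t, (1:ℝ) - x t ≠ 0 := fun t => ne_of_gt (h1x t)
  set f : ℝ → ℝ := fun t => x t / (1 - x t) with hfdef
  have hfc : Continuous f := hxc.div (by continuity) h1xne
  set A := ∫ t in (0:ℝ)..T, a t with hA
  set B := ∫ t in (0:ℝ)..T, b t with hB
  set X := ∫ t in (0:ℝ)..T, b t * x t with hX
  set Y := ∫ t in (0:ℝ)..T, b t * f t with hY
  set Z := ∫ t in (0:ℝ)..T, b t * (x t * f t) with hZ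
  -- step 1 : Y = A
  have hYA : Y = A := by
    have hgd : ∀ t, HasDerivAt (fun s => Real.log (1 - x s)) (b t * f t - a t) t := by
      intro t
      have h1 : HasDerivAt (fun s => 1 - x s) (-(deriv x t)) t := by
        simpa using (hasDerivAt_const t (1:ℝ)).fun_sub (hxd t).hasDerivAt
      have h2 := (Real.hasDerivAt_log (h1xne t)).comp t h1
      refine HasDerivAt.congr_deriv h2 ?_
      have hne := h1xne t
      rw [hode t, hfdef]
      field_simp
      ring
    have h3 : ∫ t in (0:ℝ)..T, (b t * f t - a t)
        = Real.log (1 - x T) - Real.log (1 - x 0) :=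
      intervalIntegral.integral_eq_sub_of_hasDerivAt (fun t _ => hgd t)
        (rfm_contInt (by exact (hb.fun_mul hfc).sub ha) 0 T)
    rw [hxp, sub_self] at h3
    rw [intervalIntegral.integral_sub (rfm_contInt (hb.fun_mul hfc) 0 T) (rfm_contInt ha 0 T)] at h3
    have : Y - A = 0 := h3
    linarith
  -- step 2 : ∫ a x = A - X
  have hAX : ∫ t in (0:ℝ)..T, a t * x t = A - X := by
    have hxd' : ∀ t, HasDerivAt x (a t * (1 - x t) - b t * x t) t :=
      fun t => (hode t) ▸ (hxd t).hasDerivAt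
    have h4 : ∫ t in (0:ℝ)..T, (a t * (1 - x t) - b t * x t) = x T - x 0 :=
      intervalIntegral.integral_eq_sub_of_hasDerivAt (fun t _ => hxd' t)
        (rfm_contInt (by continuity) 0 T)
    rw [hxp, sub_self] at h4
    have heq : (fun t => a t * (1 - x t) - b t * x t)
        = fun t => a t - (a t * x t + b t * x t) := by funext t; ring
    rw [heq] at h4
    rw [intervalIntegral.integral_sub (rfm_contInt ha 0 T)
        (rfm_contInt ((ha.fun_mul hxc).fun_add (hb.fun_mul hxc)) 0 T),
      intervalIntegral.integral_add (rfm_contInt (ha.fun_mul hxc) 0 T)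
        (rfm_contInt (hb.fun_mul hxc) 0 T)] at h4
    have h5 : A - ((∫ t in (0:ℝ)..T, a t * x t) + X) = 0 := h4
    linarith
  -- step 3 : Chebyshev : X * Y ≤ B * Z
  have hcheb : X * Y ≤ B * Z := by
    have hnn : ∀ s t, 0 ≤ b s * b t * ((x s - x t) * (f s - f t)) := by
      intro s t
      apply mul_nonneg (mul_nonneg (hbpos s) (hbpos t))
      rcases le_total (x s) (x t) with h | h
      · have hf' : f s ≤ f t := by
          rw [hfdef]
          rw [div_le_div_iff₀ (h1x s) (h1x t)]
          nlinarith
        nlinarith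
      · have hf' : f t ≤ f s := by
          rw [hfdef]
          rw [div_le_div_iff₀ (h1x t) (h1x s)]
          nlinarith
        nlinarith
    have hinner : ∀ s, (∫ t in (0:ℝ)..T, b s * b t * ((x s - x t) * (f s - f t)))
        = ((b s * (x s * f s)) * B + b s * Z) - ((b s * x s) * Y + (b s * f s) * X) := by
      intro s
      have hrw : (fun t => b s * b t * ((x s - x t) * (f s - f t)))
          = fun t => ((b s * (x s * f s)) * b t + b s * (b t * (x t * f t)))
            - ((b s * x s) * (b t * f t) + (b s * f s) * (b t * x t)) := by
        funext t; ring
      rw [hrw,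
        intervalIntegral.integral_sub
          (by exact ((rfm_contInt hb 0 T).const_mul _).add ((rfm_contInt (hb.fun_mul (hxc.fun_mul hfc)) 0 T).const_mul _))
          (by exact ((rfm_contInt (hb.fun_mul hfc) 0 T).const_mul _).add ((rfm_contInt (hb.fun_mul hxc) 0 T).const_mul _)),
        intervalIntegral.integral_add
          ((rfm_contInt hb 0 T).const_mul _) ((rfm_contInt (hb.fun_mul (hxc.fun_mul hfc)) 0 T).const_mul _),
        intervalIntegral.integral_add
          ((rfm_contInt (hb.fun_mul hfc) 0 T).const_mul _) ((rfm_contInt (hb.fun_mul hxc) 0 T).const_mul _),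
        intervalIntegral.integral_const_mul, intervalIntegral.integral_const_mul,
        intervalIntegral.integral_const_mul, intervalIntegral.integral_const_mul]
    have h0 : (0:ℝ) ≤ ∫ s in (0:ℝ)..T, ∫ t in (0:ℝ)..T, b s * b t * ((x s - x t) * (f s - f t)) :=
      intervalIntegral.integral_nonneg hT.le
        (fun s _ => intervalIntegral.integral_nonneg hT.le (fun t _ => hnn s t))
    have h1 : (∫ s in (0:ℝ)..T, ∫ t in (0:ℝ)..T, b s * b t * ((x s - x t) * (f s - f t)))
        = ∫ s in (0:ℝ)..T, (((b s * (x s * f s)) * B + b s * Z) - ((b s * x s) * Y + (b s * f s) * X)) :=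
      intervalIntegral.integral_congr (fun s _ => hinner s)
    rw [h1] at h0
    rw [intervalIntegral.integral_sub
        (by exact ((rfm_contInt (hb.fun_mul (hxc.fun_mul hfc)) 0 T).mul_const _).add ((rfm_contInt hb 0 T).mul_const _))
        (by exact ((rfm_contInt (hb.fun_mul hxc) 0 T).mul_const _).add ((rfm_contInt (hb.fun_mul hfc) 0 T).mul_const _)),
      intervalIntegral.integral_add
        ((rfm_contInt (hb.fun_mul (hxc.fun_mul hfc)) 0 T).mul_const _) ((rfm_contInt hb 0 T).mul_const _),
      intervalIntegral.integral_add
        ((rfm_contInt (hb.fun_mul hxc) 0 T).mul_const _) ((rfm_contInt (hb.fun_mul hfc) 0 T).mul_const _),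
      intervalIntegral.integral_mul_const, intervalIntegral.integral_mul_const,
      intervalIntegral.integral_mul_const, intervalIntegral.integral_mul_const] at h0
    -- h0 : 0 ≤ (Z * B + B * Z) - (X * Y + Y * X)
    nlinarith [h0]
  -- step 4 : Z = Y - X
  have hZYX : Z = Y - X := by
    have hrw : (fun t => b t * (x t * f t)) = fun t => b t * f t - b t * x t := by
      funext t
      have h := h1xne t
      rw [hfdef]
      field_simp
      ring
    rw [hZ, hrw, intervalIntegral.integral_sub (rfm_contInt (hb.fun_mul hfc) 0 T)
      (rfm_contInt (hb.fun_mul hxc) 0 T)]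
  -- conclude
  rw [hAX]
  rw [hZYX, hYA] at hcheb
  linear_combination hcheb


lemma rfm_chain (F : ℕ → ℝ) (n : ℕ) (h : ∀ i, 1 ≤ i → i ≤ n → F (i-1) = F i) :
    ∀ j, j ≤ n → F j = F n := by
  have key : ∀ m j, j + m = n → F j = F n := by
    intro m
    induction m with
    | zero =>
      intro j hj
      have : j = n := by omega
      rw [this]
    | succ m ih =>
      intro j hj
      have h1 : F j = F (j+1) := by
        have := h (j+1) (by omega) (by omega)
        simpa using this
      rw [h1]; exact ih (j+1) (by omega)
  intro j hj; exact key (n - j) j (by omega)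

theorem rfm_no_goe_even_evenpairs
    (n : ℕ) (hn : 1 ≤ n) (T : ℝ) (hT : 0 < T)
    (u : ℕ → ℝ → ℝ) (x : ℕ → ℝ → ℝ) (e : ℕ → ℝ)
    (hu_cont : ∀ i, i ≤ n → Continuous (u i))
    (hu_pos : ∀ i, i ≤ n → ∀ t, 0 < u i t)
    (hu_per : ∀ i, i ≤ n → ∀ t, u i (t + T) = u i t)
    (hx0 : ∀ t, x 0 t = 1) (hxtop : ∀ t, x (n+1) t = 0)
    (hxdiff : ∀ i, 1 ≤ i → i ≤ n → Differentiable ℝ (x i))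
    (hxper : ∀ i, 1 ≤ i → i ≤ n → ∀ t, x i (t + T) = x i t)
    (hxmem : ∀ i, 1 ≤ i → i ≤ n → ∀ t, x i t ∈ Set.Ioo (0:ℝ) 1)
    (hode : ∀ i, 1 ≤ i → i ≤ n → ∀ t,
      deriv (x i) t
        = u (i-1) t * x (i-1) t * (1 - x i t) - u i t * x i t * (1 - x (i+1) t))
    (he0 : e 0 = 1) (hetop : e (n+1) = 0)
    (hemem : ∀ i, 1 ≤ i → i ≤ n → e i ∈ Set.Ioo (0:ℝ) 1)
    (heq : ∀ i, 1 ≤ i → i ≤ n →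
      (1/T * ∫ t in (0:ℝ)..T, u (i-1) t) * e (i-1) * (1 - e i)
        = (1/T * ∫ t in (0:ℝ)..T, u i t) * e i * (1 - e (i+1)))
    (heven : Even n)
    (hprop : ∀ i, Even i → i ≤ n - 2 →
      ∃ α : ℝ, 0 < α ∧ ∀ t, u i t = α * u (i+1) t) :
    1/T * ∫ t in (0:ℝ)..T, u n t * x n t ≤ (1/T * ∫ t in (0:ℝ)..T, u n t) * e n := by
  have hTne : T ≠ 0 := ne_of_gt hT
  have hn2 : 2 ≤ n := by obtain ⟨k, hk⟩ := heven; omega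
  have hI : ∀ g : ℝ → ℝ, Continuous g → IntervalIntegrable g volume (0:ℝ) T :=
    fun g h => h.intervalIntegrable 0 T
  have hxc : ∀ i, i ≤ n + 1 → Continuous (x i) := by
    intro i hi
    rcases Nat.eq_zero_or_pos i with h0 | h1
    · have : x i = fun _ => (1:ℝ) := by subst h0; exact funext hx0
      rw [this]; exact continuous_const
    · rcases eq_or_lt_of_le hi with he | hl
      · have : x i = fun _ => (0:ℝ) := by rw [he]; exact funext hxtop
        rw [this]; exact continuous_const
      · exact (hxdiff i h1 (by omega)).continuous
  have hIpos : ∀ g : ℝ → ℝ, Continuous g → (∀ t, 0 < g t) → 0 < ∫ t in (0:ℝ)..T, g t :=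
    fun g hc hp => intervalIntegral.intervalIntegral_pos_of_pos (hI g hc) hp hT
  have hUpos : ∀ i, i ≤ n → 0 < ∫ t in (0:ℝ)..T, u i t := fun i hi =>
    hIpos _ (hu_cont i hi) (hu_pos i hi)
  have hc1 : ∀ i, i ≤ n → Continuous (fun t => u i t * x i t * (1 - x (i+1) t)) :=
    fun i hi => ((hu_cont i hi).mul (hxc i (by omega))).mul
      (continuous_const.sub (hxc (i+1) (by omega)))
  have hcux : ∀ i, i ≤ n → Continuous (fun t => u i t * x i t) :=
    fun i hi => (hu_cont i hi).mul (hxc i (by omega))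
  set Φ : ℕ → ℝ := fun i => ∫ t in (0:ℝ)..T, u i t * x i t * (1 - x (i+1) t) with hPhi
  -- flux chain
  have hflux : ∀ i, 1 ≤ i → i ≤ n → Φ (i-1) = Φ i := by
    intro i h1 h2
    have hi1 : i - 1 + 1 = i := Nat.succ_pred_eq_of_pos h1
    have hD : ∀ t : ℝ, HasDerivAt (x i)
        (u (i-1) t * x (i-1) t * (1 - x i t) - u i t * x i t * (1 - x (i+1) t)) t := by
      intro t
      rw [← hode i h1 h2 t]
      exact ((hxdiff i h1 h2) t).hasDerivAt
    have hcA : Continuous (fun t => u (i-1) t * x (i-1) t * (1 - x i t)) := by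
      have := hc1 (i-1) (by omega)
      rw [hi1] at this
      exact this
    have hcB := hc1 i h2
    have hint : ∫ t in (0:ℝ)..T,
        (u (i-1) t * x (i-1) t * (1 - x i t) - u i t * x i t * (1 - x (i+1) t))
        = x i T - x i 0 :=
      intervalIntegral.integral_eq_sub_of_hasDerivAt (fun t _ => hD t)
        (hI _ (hcA.sub hcB))
    have hper0 : x i T = x i 0 := by
      have := hxper i h1 h2 0
      simpa using this
    rw [hper0, sub_self, intervalIntegral.integral_sub (hI _ hcA) (hI _ hcB)] at hint
    have e1 : Φ (i-1) = ∫ t in (0:ℝ)..T, u (i-1) t * x (i-1) t * (1 - x i t) := by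
      simp only [hPhi]
      rw [hi1]
    have e2 : Φ i = ∫ t in (0:ℝ)..T, u i t * x i t * (1 - x (i+1) t) := by
      simp only [hPhi]
    rw [e1, e2]
    linarith
  have hfluxn : ∀ j, j ≤ n → Φ j = Φ n := rfm_chain Φ n hflux
  -- the comparison point d
  set d : ℕ → ℝ := fun j => if Even j then
      (∫ t in (0:ℝ)..T, u (j-1) t * x (j-1) t * x j t)
        / (∫ t in (0:ℝ)..T, u (j-1) t * x (j-1) t)
    else (∫ t in (0:ℝ)..T, u j t * x j t) / (∫ t in (0:ℝ)..T, u j t) with hd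
  have hdodd : ∀ j, ¬ Even j →
      d j = (∫ t in (0:ℝ)..T, u j t * x j t) / (∫ t in (0:ℝ)..T, u j t) := by
    intro j hj
    simp only [hd, if_neg hj]
  have hdeven : ∀ j, Even j →
      d j = (∫ t in (0:ℝ)..T, u (j-1) t * x (j-1) t * x j t)
        / (∫ t in (0:ℝ)..T, u (j-1) t * x (j-1) t) := by
    intro j hj
    simp only [hd, if_pos hj]
  have hoddn1 : ¬ Even (n+1) := by
    rw [Nat.even_add_one]
    simpa using heven
  have hdtop : d (n+1) = 0 := by
    rw [hdodd _ hoddn1]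
    have hz : (∫ t in (0:ℝ)..T, u (n+1) t * x (n+1) t) = 0 := by
      simp [hxtop]
    rw [hz, zero_div]
  have hdpos : ∀ j, 1 ≤ j → j ≤ n → 0 < d j := by
    intro j h1 h2
    by_cases hj : Even j
    · rw [hdeven j hj]
      have hj2 : 2 ≤ j := by obtain ⟨k, hk⟩ := hj; omega
      have hc : Continuous (fun t => u (j-1) t * x (j-1) t) := hcux (j-1) (by omega)
      apply div_pos
      · exact hIpos _ (hc.mul (hxc j (by omega))) (fun t =>
          mul_pos (mul_pos (hu_pos (j-1) (by omega) t)
            (hxmem (j-1) (by omega) (by omega) t).1) (hxmem j h1 h2 t).1)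
      · exact hIpos _ hc (fun t =>
          mul_pos (hu_pos (j-1) (by omega) t) (hxmem (j-1) (by omega) (by omega) t).1)
    · rw [hdodd j hj]
      exact div_pos
        (hIpos _ (hcux j h2) (fun t => mul_pos (hu_pos j h2 t) (hxmem j h1 h2 t).1))
        (hUpos j h2)
  -- constraint C0 (equality)
  have hC0 : (∫ t in (0:ℝ)..T, u 0 t) * (1 - d 1) = Φ 0 := by
    obtain ⟨α, hαpos, hαeq⟩ := hprop 0 Even.zero (by omega)
    have hU1 : 0 < ∫ t in (0:ℝ)..T, u 1 t := hUpos 1 (by omega)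
    have hd1 : d 1 = (∫ t in (0:ℝ)..T, u 1 t * x 1 t) / (∫ t in (0:ℝ)..T, u 1 t) := by
      rw [hdodd 1 (by simp)]
    have hU0 : (∫ t in (0:ℝ)..T, u 0 t) = α * ∫ t in (0:ℝ)..T, u 1 t := by
      rw [← intervalIntegral.integral_const_mul]
      apply intervalIntegral.integral_congr
      intro t _
      exact hαeq t
    have hΦ0 : Φ 0 = (∫ t in (0:ℝ)..T, u 0 t) - α * ∫ t in (0:ℝ)..T, u 1 t * x 1 t := by
      simp only [hPhi]
      rw [← intervalIntegral.integral_const_mul,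
        ← intervalIntegral.integral_sub (hI _ (hu_cont 0 (by omega)))
          (hI _ (continuous_const.fun_mul (hcux 1 (by omega))))]
      apply intervalIntegral.integral_congr
      intro t _
      simp only [hx0, hαeq, Nat.zero_add]
      ring
    rw [hΦ0, hd1, hU0]
    field_simp
  -- odd constraints (equality)
  have hCodd : ∀ j, 1 ≤ j → j ≤ n - 1 → ¬ Even j →
      (∫ t in (0:ℝ)..T, u j t) * d j * (1 - d (j+1)) = Φ j := by
    intro j h1 h2 hodd
    have hjn : j ≤ n := by omega
    have hj1ev : Even (j+1) := Nat.even_add_one.mpr hodd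
    have hP : 0 < ∫ t in (0:ℝ)..T, u j t * x j t :=
      hIpos _ (hcux j hjn) (fun t => mul_pos (hu_pos j hjn t) (hxmem j h1 hjn t).1)
    have hU : 0 < ∫ t in (0:ℝ)..T, u j t := hUpos j hjn
    have hdj : d j = (∫ t in (0:ℝ)..T, u j t * x j t) / (∫ t in (0:ℝ)..T, u j t) :=
      hdodd j hodd
    have hdj1 : d (j+1) = (∫ t in (0:ℝ)..T, u j t * x j t * x (j+1) t)
        / (∫ t in (0:ℝ)..T, u j t * x j t) := by
      rw [hdeven (j+1) hj1ev]
      simp only [Nat.add_sub_cancel]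
    have hΦj : Φ j = (∫ t in (0:ℝ)..T, u j t * x j t)
        - ∫ t in (0:ℝ)..T, u j t * x j t * x (j+1) t := by
      simp only [hPhi]
      rw [← intervalIntegral.integral_sub (hI _ (hcux j hjn))
        (hI _ ((hcux j hjn).fun_mul (hxc (j+1) (by omega))))]
      apply intervalIntegral.integral_congr
      intro t _
      ring
    rw [hdj, hdj1, hΦj]
    field_simp
  -- even constraints (inequality, via the key lemma)
  have hCeven : ∀ j, 2 ≤ j → j ≤ n → Even j →
      Φ j ≤ (∫ t in (0:ℝ)..T, u j t) * d j * (1 - d (j+1)) := by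
    intro j h2 hjn hjev
    have h1 : 1 ≤ j := by omega
    have hcA : Continuous (fun t => u (j-1) t * x (j-1) t) := hcux (j-1) (by omega)
    have hcB : Continuous (fun t => u j t * (1 - x (j+1) t)) :=
      (hu_cont j hjn).mul (continuous_const.sub (hxc (j+1) (by omega)))
    have hBnn : ∀ t, 0 ≤ u j t * (1 - x (j+1) t) := by
      intro t
      apply mul_nonneg (hu_pos j hjn t).le
      rcases eq_or_lt_of_le hjn with he | hl
      · rw [he, hxtop t]; norm_num
      · have := (hxmem (j+1) (by omega) (by omega) t).2
        linarith
    have hper0 : x j T = x j 0 := by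
      have := hxper j h1 hjn 0
      simpa using this
    have hode' : ∀ t, deriv (x j) t
        = (u (j-1) t * x (j-1) t) * (1 - x j t) - (u j t * (1 - x (j+1) t)) * x j t := by
      intro t
      rw [hode j h1 hjn t]
      ring
    have hkey : (∫ t in (0:ℝ)..T, (u j t * (1 - x (j+1) t)) * x j t)
          * (∫ t in (0:ℝ)..T, u (j-1) t * x (j-1) t)
        ≤ (∫ t in (0:ℝ)..T, (u (j-1) t * x (j-1) t) * x j t)
          * (∫ t in (0:ℝ)..T, u j t * (1 - x (j+1) t)) :=
      rfm_key T hT (fun t => u (j-1) t * x (j-1) t) (fun t => u j t * (1 - x (j+1) t))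
        (x j) hcA hcB hBnn (hxdiff j h1 hjn) (hxmem j h1 hjn) hper0 hode'
    have hA : 0 < ∫ t in (0:ℝ)..T, u (j-1) t * x (j-1) t :=
      hIpos _ hcA (fun t => mul_pos (hu_pos (j-1) (by omega) t)
        (hxmem (j-1) (by omega) (by omega) t).1)
    have hdj : d j = (∫ t in (0:ℝ)..T, (u (j-1) t * x (j-1) t) * x j t)
        / (∫ t in (0:ℝ)..T, u (j-1) t * x (j-1) t) := by
      rw [hdeven j hjev]
    have hΦbx : Φ j = ∫ t in (0:ℝ)..T, (u j t * (1 - x (j+1) t)) * x j t := by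
      simp only [hPhi]
      apply intervalIntegral.integral_congr
      intro t _
      ring
    have hbeq : (∫ t in (0:ℝ)..T, u j t) * (1 - d (j+1))
        = ∫ t in (0:ℝ)..T, u j t * (1 - x (j+1) t) := by
      rcases eq_or_lt_of_le hjn with he | hl
      · subst he
        rw [hdtop]
        have : (∫ t in (0:ℝ)..T, u j t * (1 - x (j+1) t)) = ∫ t in (0:ℝ)..T, u j t := by
          apply intervalIntegral.integral_congr
          intro t _
          simp only [hxtop]
          ring
        rw [this]
        ring
      · have hj2 : j ≤ n - 2 := by
          rcases hjev with ⟨k, hk⟩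
          rcases heven with ⟨m, hm⟩
          omega
        obtain ⟨α, hαpos, hαeq⟩ := hprop j hjev hj2
        have hj1n : j + 1 ≤ n := by omega
        have hoddj1 : ¬ Even (j+1) := by
          rw [Nat.even_add_one]
          simpa using hjev
        have hU1 : 0 < ∫ t in (0:ℝ)..T, u (j+1) t := hUpos (j+1) hj1n
        have hUj : (∫ t in (0:ℝ)..T, u j t) = α * ∫ t in (0:ℝ)..T, u (j+1) t := by
          rw [← intervalIntegral.integral_const_mul]
          apply intervalIntegral.integral_congr
          intro t _
          exact hαeq t
        have hBval : (∫ t in (0:ℝ)..T, u j t * (1 - x (j+1) t))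
            = α * ((∫ t in (0:ℝ)..T, u (j+1) t) - ∫ t in (0:ℝ)..T, u (j+1) t * x (j+1) t) := by
          rw [← intervalIntegral.integral_sub (hI _ (hu_cont (j+1) hj1n))
            (hI _ (hcux (j+1) hj1n)), ← intervalIntegral.integral_const_mul]
          apply intervalIntegral.integral_congr
          intro t _
          simp only [hαeq]
          ring
        rw [hdodd (j+1) hoddj1, hUj, hBval]
        field_simp
    calc Φ j = ∫ t in (0:ℝ)..T, (u j t * (1 - x (j+1) t)) * x j t := hΦbx
      _ ≤ ((∫ t in (0:ℝ)..T, (u (j-1) t * x (j-1) t) * x j t)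
            / (∫ t in (0:ℝ)..T, u (j-1) t * x (j-1) t))
          * ((∫ t in (0:ℝ)..T, u j t) * (1 - d (j+1))) := by
        rw [div_mul_eq_mul_div, le_div_iff₀ hA, hbeq]
        exact hkey
      _ = (∫ t in (0:ℝ)..T, u j t)
          * ((∫ t in (0:ℝ)..T, (u (j-1) t * x (j-1) t) * x j t)
            / (∫ t in (0:ℝ)..T, u (j-1) t * x (j-1) t)) * (1 - d (j+1)) := by ring
      _ = (∫ t in (0:ℝ)..T, u j t) * d j * (1 - d (j+1)) := by rw [← hdj]
  -- equilibrium chain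
  have hG : ∀ j, j ≤ n →
      (∫ t in (0:ℝ)..T, u j t) * e j * (1 - e (j+1)) = (∫ t in (0:ℝ)..T, u n t) * e n := by
    have hstep : ∀ i, 1 ≤ i → i ≤ n →
        (fun j => (∫ t in (0:ℝ)..T, u j t) * e j * (1 - e (j+1))) (i-1)
          = (fun j => (∫ t in (0:ℝ)..T, u j t) * e j * (1 - e (j+1))) i := by
      intro i h1 h2
      have hi1 : i - 1 + 1 = i := Nat.succ_pred_eq_of_pos h1
      simp only
      rw [hi1]
      have := heq i h1 h2
      have h3 := congrArg (fun r => T * r) this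
      calc (∫ t in (0:ℝ)..T, u (i-1) t) * e (i-1) * (1 - e i)
          = T * ((1/T * ∫ t in (0:ℝ)..T, u (i-1) t) * e (i-1) * (1 - e i)) := by
            field_simp
        _ = T * ((1/T * ∫ t in (0:ℝ)..T, u i t) * e i * (1 - e (i+1))) := h3
        _ = (∫ t in (0:ℝ)..T, u i t) * e i * (1 - e (i+1)) := by field_simp
    intro j hj
    have h := rfm_chain (fun j => (∫ t in (0:ℝ)..T, u j t) * e j * (1 - e (j+1))) n hstep j hj
    simp only [hetop] at h
    simpa using h
  -- final contradiction argument
  by_contra hcon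
  push_neg at hcon
  have hΦn : Φ n = ∫ t in (0:ℝ)..T, u n t * x n t := by
    simp only [hPhi]
    apply intervalIntegral.integral_congr
    intro t _
    simp only [hxtop]
    ring
  have hRC : (∫ t in (0:ℝ)..T, u n t) * e n < Φ n := by
    rw [hΦn]
    have h2 := mul_lt_mul_of_pos_left hcon hT
    calc (∫ t in (0:ℝ)..T, u n t) * e n
        = T * ((1/T * ∫ t in (0:ℝ)..T, u n t) * e n) := by field_simp
      _ < T * (1/T * ∫ t in (0:ℝ)..T, u n t * x n t) := h2
      _ = ∫ t in (0:ℝ)..T, u n t * x n t := by field_simp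
  have hdown : ∀ m, m ≤ n - 1 → e (n - m) < d (n - m) := by
    intro m
    induction m with
    | zero =>
      intro _
      simp only [Nat.sub_zero]
      have hce := hCeven n hn2 le_rfl heven
      rw [hdtop] at hce
      have hun := hUpos n le_rfl
      nlinarith [hce, hRC, hun]
    | succ m ih =>
      intro hm
      have ihh := ih (by omega)
      have hj1 : 1 ≤ n - (m+1) := by omega
      have hjn : n - (m+1) ≤ n - 1 := by omega
      have hjp1 : n - (m+1) + 1 = n - m := by omega
      set j := n - (m+1) with hjdef
      have hCj : Φ j ≤ (∫ t in (0:ℝ)..T, u j t) * d j * (1 - d (j+1)) := by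
        by_cases hjev : Even j
        · exact hCeven j (by obtain ⟨k, hk⟩ := hjev; omega) (by omega) hjev
        · exact le_of_eq (hCodd j hj1 hjn hjev).symm
      have hGj : (∫ t in (0:ℝ)..T, u j t) * e j * (1 - e (j+1))
          = (∫ t in (0:ℝ)..T, u n t) * e n := hG j (by omega)
      have hΦj : Φ j = Φ n := hfluxn j (by omega)
      have hd1 : e (j+1) < d (j+1) := by rw [hjp1]; exact ihh
      have he1 : e (j+1) < 1 := (hemem (j+1) (by omega) (by omega)).2
      have hdj : 0 < d j := hdpos j hj1 (by omega)
      have hU : 0 < ∫ t in (0:ℝ)..T, u j t := hUpos j (by omega)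
      have hfact : (∫ t in (0:ℝ)..T, u j t) * d j * (1 - d (j+1))
          ≤ (∫ t in (0:ℝ)..T, u j t) * d j * (1 - e (j+1)) := by
        apply mul_le_mul_of_nonneg_left (by linarith) (by positivity)
      have hlt : (∫ t in (0:ℝ)..T, u j t) * e j * (1 - e (j+1))
          < (∫ t in (0:ℝ)..T, u j t) * d j * (1 - e (j+1)) := by
        calc (∫ t in (0:ℝ)..T, u j t) * e j * (1 - e (j+1))
            = (∫ t in (0:ℝ)..T, u n t) * e n := hGj
          _ < Φ n := hRC
          _ = Φ j := hΦj.symm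
          _ ≤ (∫ t in (0:ℝ)..T, u j t) * d j * (1 - d (j+1)) := hCj
          _ ≤ _ := hfact
      have hpos : 0 < (∫ t in (0:ℝ)..T, u j t) * (1 - e (j+1)) :=
        mul_pos hU (by linarith)
      nlinarith [hlt, hpos]
  have hefin : e 1 < d 1 := by
    have := hdown (n-1) le_rfl
    rw [show n - (n-1) = 1 by omega] at this
    exact this
  have hG0 : (∫ t in (0:ℝ)..T, u 0 t) * (1 - e 1) = (∫ t in (0:ℝ)..T, u n t) * e n := by
    have := hG 0 (by omega)
    rw [he0] at this
    simpa using this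
  have hU0 : 0 < ∫ t in (0:ℝ)..T, u 0 t := hUpos 0 (by omega)
  have hΦ0 : Φ 0 = Φ n := hfluxn 0 (by omega)
  nlinarith [hG0, hRC, hΦ0, hC0, mul_pos hU0 (sub_pos.mpr hefin)]
end

section
/- Let n be even, and consider the RFM with continuous positive T-periodic rates such that for every i ∈ {1,3,…,n-1} there exists αᵢ > 0 with uᵢ(t) = αᵢ u_{i+1}(t) for all t. Then there is no gain of entrainment: R_P ≤ R_C. -/
open MeasureTheory intervalIntegral Real Filter

lemma rfm_int_pos {T : ℝ} (hT : 0 < T) {f : ℝ → ℝ} (hf : Continuous f)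
    (hpos : ∀ t, 0 < f t) : 0 < ∫ t in (0:ℝ)..T, f t :=
  intervalIntegral.intervalIntegral_pos_of_pos (hf.intervalIntegrable 0 T) hpos hT

lemma rfm_int_congr {T : ℝ} {f g : ℝ → ℝ} (h : ∀ t, f t = g t) :
    ∫ t in (0:ℝ)..T, f t = ∫ t in (0:ℝ)..T, g t :=
  intervalIntegral.integral_congr (fun t _ => h t)

lemma rfm_cheb {T : ℝ} (hT : 0 < T) (p a : ℝ → ℝ)
    (hp : Continuous p) (ha : Continuous a)
    (hppos : ∀ t, 0 < p t) (ha0 : ∀ t, 0 < a t) :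
    (∫ t in (0:ℝ)..T, p t * (1 - a t)) * (∫ t in (0:ℝ)..T, p t)
      ≤ (∫ t in (0:ℝ)..T, p t * a t) * (∫ t in (0:ℝ)..T, p t * (1 - a t) / a t) := by
  have hane : ∀ t, a t ≠ 0 := fun t => ne_of_gt (ha0 t)
  set A := ∫ t in (0:ℝ)..T, p t * a t with hAdef
  set B := ∫ t in (0:ℝ)..T, p t with hBdef
  set C := ∫ t in (0:ℝ)..T, p t * (1 - a t) with hCdef
  set D := ∫ t in (0:ℝ)..T, p t * (1 - a t) / a t with hDdef
  have hA : 0 < A := rfm_int_pos hT (hp.mul ha) (fun t => mul_pos (hppos t) (ha0 t))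
  have hB : 0 < B := rfm_int_pos hT hp hppos
  set m := A / B with hmdef
  have hm : 0 < m := div_pos hA hB
  have hc1 : Continuous fun t => p t * (1 - a t) := hp.mul (continuous_const.sub ha)
  have hc2 : Continuous fun t => p t * (1 - a t) / a t := hc1.div ha hane
  have hc3 : Continuous fun t => p t * a t := hp.mul ha
  have key : ∀ t, p t * (1 - a t) - m * (p t * (1 - a t) / a t)
      ≤ (1 - m) / m * (p t * a t - m * p t) := by
    intro t
    have hx0 : 0 < a t := ha0 t
    have hq : 0 < p t := hppos t
    have hdiff : (1 - m) / m * (p t * a t - m * p t)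
        - (p t * (1 - a t) - m * (p t * (1 - a t) / a t))
        = p t * (a t - m)^2 / (m * a t) := by
      field_simp
      ring
    nlinarith [mul_pos hm hx0, sq_nonneg (a t - m), mul_pos hq (mul_pos hm hx0),
      div_nonneg (mul_nonneg hq.le (sq_nonneg (a t - m))) (mul_pos hm hx0).le]
  have hint1 : IntervalIntegrable (fun t => p t * (1 - a t) - m * (p t * (1 - a t) / a t))
      volume 0 T := (hc1.sub (continuous_const.mul hc2)).intervalIntegrable 0 T
  have hint2 : IntervalIntegrable (fun t => (1 - m) / m * (p t * a t - m * p t))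
      volume 0 T := (continuous_const.mul (hc3.sub (continuous_const.mul hp))).intervalIntegrable 0 T
  have hmono := intervalIntegral.integral_mono_on hT.le hint1 hint2 (fun t _ => key t)
  have hL : (∫ t in (0:ℝ)..T, (p t * (1 - a t) - m * (p t * (1 - a t) / a t))) = C - m * D := by
    rw [intervalIntegral.integral_sub (f := fun t => p t * (1 - a t))
      (g := fun t => m * (p t * (1 - a t) / a t)) (hc1.intervalIntegrable 0 T)
      ((continuous_const.mul hc2).intervalIntegrable 0 T),
      intervalIntegral.integral_const_mul]
  have hR : (∫ t in (0:ℝ)..T, (1 - m) / m * (p t * a t - m * p t)) = 0 := by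
    rw [intervalIntegral.integral_const_mul,
      intervalIntegral.integral_sub (f := fun t => p t * a t) (g := fun t => m * p t)
        (hc3.intervalIntegrable 0 T)
        ((continuous_const.mul hp).intervalIntegrable 0 T),
      intervalIntegral.integral_const_mul]
    have : A - m * B = 0 := by
      rw [hmdef]; field_simp; ring
    rw [← hAdef, ← hBdef, this, mul_zero]
  rw [hL, hR] at hmono
  have hCmD : C ≤ m * D := by linarith
  calc C * B ≤ (m * D) * B := by
        exact mul_le_mul_of_nonneg_right hCmD hB.le
    _ = A * D := by rw [hmdef]; field_simp

noncomputable def rfmG (R : ℝ) (ub : ℕ → ℝ) (n : ℕ) : ℕ → ℝ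
  | 0 => 0
  | (k+1) => R / (ub (n - k) * (1 - rfmG R ub n k))

lemma rfmG_zero (R : ℝ) (ub : ℕ → ℝ) (n : ℕ) : rfmG R ub n 0 = 0 := rfl
lemma rfmG_succ (R : ℝ) (ub : ℕ → ℝ) (n k : ℕ) :
    rfmG R ub n (k+1) = R / (ub (n - k) * (1 - rfmG R ub n k)) := rfl

set_option maxHeartbeats 2000000 in
theorem rfm_no_goe_even_oddpairs
    (n : ℕ) (hn : 1 ≤ n) (T : ℝ) (hT : 0 < T)
    (u : ℕ → ℝ → ℝ) (x : ℕ → ℝ → ℝ) (e : ℕ → ℝ)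
    (hu_cont : ∀ i, i ≤ n → Continuous (u i))
    (hu_pos : ∀ i, i ≤ n → ∀ t, 0 < u i t)
    (hu_per : ∀ i, i ≤ n → ∀ t, u i (t + T) = u i t)
    (hx0 : ∀ t, x 0 t = 1) (hxtop : ∀ t, x (n+1) t = 0)
    (hxdiff : ∀ i, 1 ≤ i → i ≤ n → Differentiable ℝ (x i))
    (hxper : ∀ i, 1 ≤ i → i ≤ n → ∀ t, x i (t + T) = x i t)
    (hxmem : ∀ i, 1 ≤ i → i ≤ n → ∀ t, x i t ∈ Set.Ioo (0:ℝ) 1)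
    (hode : ∀ i, 1 ≤ i → i ≤ n → ∀ t,
      deriv (x i) t
        = u (i-1) t * x (i-1) t * (1 - x i t) - u i t * x i t * (1 - x (i+1) t))
    (he0 : e 0 = 1) (hetop : e (n+1) = 0)
    (hemem : ∀ i, 1 ≤ i → i ≤ n → e i ∈ Set.Ioo (0:ℝ) 1)
    (heq : ∀ i, 1 ≤ i → i ≤ n →
      (1/T * ∫ t in (0:ℝ)..T, u (i-1) t) * e (i-1) * (1 - e i)
        = (1/T * ∫ t in (0:ℝ)..T, u i t) * e i * (1 - e (i+1)))
    (heven : Even n)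
    (hprop : ∀ i, Odd i → i ≤ n - 1 →
      ∃ α : ℝ, 0 < α ∧ ∀ t, u i t = α * u (i+1) t) :
    1/T * ∫ t in (0:ℝ)..T, u n t * x n t ≤ (1/T * ∫ t in (0:ℝ)..T, u n t) * e n := by
  have hn2 : n % 2 = 0 := Nat.even_iff.mp heven
  -- continuity of x i
  have hcx : ∀ i, i ≤ n + 1 → Continuous (x i) := by
    intro i hi
    rcases Nat.eq_zero_or_pos i with h0 | h1
    · subst h0; exact continuous_const.congr (fun t => (hx0 t).symm)
    by_cases h : i ≤ n
    · exact (hxdiff i h1 h).continuous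
    · have : i = n + 1 := by omega
      subst this; exact continuous_const.congr (fun t => (hxtop t).symm)
  have hxpos : ∀ i, i ≤ n → ∀ t, 0 < x i t := by
    intro i hi t
    rcases Nat.eq_zero_or_pos i with h0 | h1
    · subst h0; rw [hx0 t]; exact one_pos
    · exact (hxmem i h1 hi t).1
  have hxlt1 : ∀ i, 1 ≤ i → i ≤ n + 1 → ∀ t, x i t < 1 := by
    intro i h1 h2 t
    by_cases h : i ≤ n
    · exact (hxmem i h1 h t).2
    · have : i = n + 1 := by omega
      subst this; rw [hxtop t]; exact one_pos
  -- flux identity from integrating the ODE over one period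
  have hflux : ∀ i, 1 ≤ i → i ≤ n →
      (∫ t in (0:ℝ)..T, u (i-1) t * x (i-1) t * (1 - x i t))
        = ∫ t in (0:ℝ)..T, u i t * x i t * (1 - x (i+1) t) := by
    intro i h1 h2
    have hc1 : Continuous (fun t => u (i-1) t * x (i-1) t * (1 - x i t)) :=
      ((hu_cont (i-1) (by omega)).mul (hcx (i-1) (by omega))).mul
        (continuous_const.sub (hcx i (by omega)))
    have hc2 : Continuous (fun t => u i t * x i t * (1 - x (i+1) t)) :=
      ((hu_cont i h2).mul (hcx i (by omega))).mul
        (continuous_const.sub (hcx (i+1) (by omega)))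
    have hdeq : deriv (x i) = fun t =>
        u (i-1) t * x (i-1) t * (1 - x i t) - u i t * x i t * (1 - x (i+1) t) :=
      funext (hode i h1 h2)
    have hzero : (∫ t in (0:ℝ)..T, deriv (x i) t) = 0 := by
      rw [intervalIntegral.integral_deriv_eq_sub (fun t _ => hxdiff i h1 h2 t)
        (by rw [hdeq]; exact (hc1.sub hc2).intervalIntegrable 0 T)]
      have hp := hxper i h1 h2 0
      rw [zero_add] at hp
      rw [hp, sub_self]
    rw [hdeq, intervalIntegral.integral_sub (hc1.intervalIntegrable 0 T)
      (hc2.intervalIntegrable 0 T)] at hzero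
    linarith
  -- log identity
  have hlog : ∀ i, 1 ≤ i → i ≤ n →
      (∫ t in (0:ℝ)..T, u (i-1) t * x (i-1) t * (1 - x i t) / x i t)
        = ∫ t in (0:ℝ)..T, u i t * (1 - x (i+1) t) := by
    intro i h1 h2
    have hxipos : ∀ t, 0 < x i t := fun t => (hxmem i h1 h2 t).1
    have hder : ∀ t : ℝ, HasDerivAt (fun s => Real.log (x i s)) (deriv (x i) t / x i t) t :=
      fun t => ((hxdiff i h1 h2 t).hasDerivAt).log (ne_of_gt (hxipos t))
    have hdeq : (deriv fun s => Real.log (x i s)) = fun t =>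
        (u (i-1) t * x (i-1) t * (1 - x i t) - u i t * x i t * (1 - x (i+1) t)) / x i t := by
      funext t
      rw [(hder t).deriv, hode i h1 h2 t]
    have hc1 : Continuous (fun t => u (i-1) t * x (i-1) t * (1 - x i t) / x i t) :=
      (((hu_cont (i-1) (by omega)).mul (hcx (i-1) (by omega))).mul
        (continuous_const.sub (hcx i (by omega)))).div (hcx i (by omega))
        (fun t => ne_of_gt (hxipos t))
    have hc2 : Continuous (fun t => u i t * (1 - x (i+1) t)) :=
      (hu_cont i h2).mul (continuous_const.sub (hcx (i+1) (by omega)))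
    have hcF : Continuous (fun t =>
        (u (i-1) t * x (i-1) t * (1 - x i t) - u i t * x i t * (1 - x (i+1) t)) / x i t) := by
      apply Continuous.div _ (hcx i (by omega)) (fun t => ne_of_gt (hxipos t))
      exact (((hu_cont (i-1) (by omega)).mul (hcx (i-1) (by omega))).mul
        (continuous_const.sub (hcx i (by omega)))).sub
        (((hu_cont i h2).mul (hcx i (by omega))).mul
          (continuous_const.sub (hcx (i+1) (by omega))))
    have hzero : (∫ t in (0:ℝ)..T, deriv (fun s => Real.log (x i s)) t) = 0 := by
      rw [intervalIntegral.integral_deriv_eq_sub (fun t _ => (hder t).differentiableAt)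
        (by rw [hdeq]; exact hcF.intervalIntegrable 0 T)]
      have hp := hxper i h1 h2 0
      rw [zero_add] at hp
      rw [hp, sub_self]
    rw [hdeq] at hzero
    have hsplit : ∀ t,
        (u (i-1) t * x (i-1) t * (1 - x i t) - u i t * x i t * (1 - x (i+1) t)) / x i t
          = u (i-1) t * x (i-1) t * (1 - x i t) / x i t - u i t * (1 - x (i+1) t) := by
      intro t
      have hne : x i t ≠ 0 := ne_of_gt (hxipos t)
      field_simp
    rw [rfm_int_congr hsplit, intervalIntegral.integral_sub (hc1.intervalIntegrable 0 T)
      (hc2.intervalIntegrable 0 T)] at hzero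
    linarith
  -- the periodic production rate (times T)
  set R := ∫ t in (0:ℝ)..T, u n t * x n t with hRdef
  have hRpos : 0 < R := rfm_int_pos hT ((hu_cont n le_rfl).mul (hcx n (by omega)))
    (fun t => mul_pos (hu_pos n le_rfl t) (hxpos n le_rfl t))
  -- all fluxes equal R
  have hout : ∀ d : ℕ, ∀ i, 1 ≤ i → i ≤ n → n - i = d →
      (∫ t in (0:ℝ)..T, u i t * x i t * (1 - x (i+1) t)) = R := by
    intro d
    induction d with
    | zero =>
      intro i h1 h2 hd
      have : i = n := by omega
      subst this
      rw [hRdef]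
      exact rfm_int_congr (fun t => by rw [hxtop t]; ring)
    | succ d ih =>
      intro i h1 h2 hd
      have h1' : 1 ≤ i + 1 := by omega
      have h2' : i + 1 ≤ n := by omega
      have hf := hflux (i+1) h1' h2'
      simp only [Nat.add_sub_cancel] at hf
      rw [hf]
      exact ih (i+1) h1' h2' (by omega)
  have hfluxR : ∀ i, 1 ≤ i → i ≤ n →
      (∫ t in (0:ℝ)..T, u (i-1) t * x (i-1) t * (1 - x i t)) = R :=
    fun i h1 h2 => (hflux i h1 h2).trans (hout (n - i) i h1 h2 rfl)
  -- pair (Chebyshev) inequality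
  have hpair : ∀ i, 1 ≤ i → i ≤ n →
      R * (∫ t in (0:ℝ)..T, u (i-1) t * x (i-1) t)
        ≤ ((∫ t in (0:ℝ)..T, u (i-1) t * x (i-1) t) - R)
          * (∫ t in (0:ℝ)..T, u i t * (1 - x (i+1) t)) := by
    intro i h1 h2
    have hpc : Continuous (fun t => u (i-1) t * x (i-1) t) :=
      (hu_cont (i-1) (by omega)).mul (hcx (i-1) (by omega))
    have hpp : ∀ t, 0 < u (i-1) t * x (i-1) t :=
      fun t => mul_pos (hu_pos (i-1) (by omega) t) (hxpos (i-1) (by omega) t)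
    have h : (∫ t in (0:ℝ)..T, u (i-1) t * x (i-1) t * (1 - x i t))
        * (∫ t in (0:ℝ)..T, u (i-1) t * x (i-1) t)
        ≤ (∫ t in (0:ℝ)..T, u (i-1) t * x (i-1) t * x i t)
          * (∫ t in (0:ℝ)..T, u (i-1) t * x (i-1) t * (1 - x i t) / x i t) :=
      rfm_cheb hT (fun t => u (i-1) t * x (i-1) t) (x i) hpc (hcx i (by omega)) hpp
        (fun t => (hxmem i h1 h2 t).1)
    have hpa : (∫ t in (0:ℝ)..T, u (i-1) t * x (i-1) t * x i t)
        = (∫ t in (0:ℝ)..T, u (i-1) t * x (i-1) t) - R := by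
      rw [← hfluxR i h1 h2,
        ← intervalIntegral.integral_sub (f := fun t => u (i-1) t * x (i-1) t)
          (g := fun t => u (i-1) t * x (i-1) t * (1 - x i t)) (hpc.intervalIntegrable 0 T)
          ((hpc.mul (continuous_const.sub (hcx i (by omega)))).intervalIntegrable 0 T)]
      exact rfm_int_congr (fun t => by ring)
    rw [hfluxR i h1 h2, hlog i h1 h2, hpa] at h
    exact h
  -- the backward continued fraction sequence
  set gs : ℕ → ℝ := rfmG R (fun j => ∫ t in (0:ℝ)..T, u j t) n with hgsdef
  have hgs0 : gs 0 = 0 := rfl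
  have hgss : ∀ k, gs (k+1) = R / ((∫ t in (0:ℝ)..T, u (n - k) t) * (1 - gs k)) :=
    fun k => rfl
  have hub_pos : ∀ j, j ≤ n → 0 < ∫ t in (0:ℝ)..T, u j t :=
    fun j hj => rfm_int_pos hT (hu_cont j hj) (hu_pos j hj)
  -- main induction over pairs
  have main : ∀ q : ℕ, 2*q ≤ n →
      (∀ m, m ≤ 2*q → 0 ≤ gs m ∧ gs m < 1) ∧
        R ≤ (∫ t in (0:ℝ)..T, u (n - 2*q) t * x (n - 2*q) t) * (1 - gs (2*q)) := by
    intro q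
    induction q with
    | zero =>
      intro _
      constructor
      · intro m hm
        have : m = 0 := by omega
        subst this
        rw [hgs0]
        norm_num
      · have h0 : 2*0 = 0 := by ring
        rw [h0, hgs0, Nat.sub_zero, ← hRdef]
        norm_num
    | succ q ih =>
      intro hq1
      obtain ⟨hall, hRb⟩ := ih (by omega)
      obtain ⟨i, hi1, hi2, hie1, hie2, hie3⟩ :
          ∃ i, 1 ≤ i ∧ i ≤ n - 1 ∧ n - 2*q = i + 1 ∧ n - (2*q+1) = i ∧ n - (2*q+2) = i - 1 :=
        ⟨n - 2*q - 1, by omega, by omega, by omega, by omega, by omega⟩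
    
      have hodd : Odd i := by rw [Nat.odd_iff]; omega
      obtain ⟨α, hα, hαeq⟩ := hprop i hodd hi2
      rw [hie1] at hRb
      have hgk := hall (2*q) le_rfl
      set Wk := ∫ t in (0:ℝ)..T, u (i+1) t * x (i+1) t with hWkdef
      set Ub1 := ∫ t in (0:ℝ)..T, u (i+1) t with hUb1def
      have hi1n : i + 1 ≤ n := by omega
      have hin : i ≤ n := by omega
      have hWkpos : 0 < Wk := rfm_int_pos hT ((hu_cont (i+1) hi1n).mul (hcx (i+1) (by omega)))
        (fun t => mul_pos (hu_pos (i+1) hi1n t) (hxpos (i+1) hi1n t))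
      have hUb1pos : 0 < Ub1 := hub_pos (i+1) hi1n
      have hWkUb : Wk < Ub1 := by
        have hsub : (∫ t in (0:ℝ)..T, u (i+1) t * (1 - x (i+1) t)) = Ub1 - Wk := by
          rw [hUb1def, hWkdef, ← intervalIntegral.integral_sub (g := fun t => u (i+1) t * x (i+1) t)
            ((hu_cont (i+1) hi1n).intervalIntegrable 0 T)
            (((hu_cont (i+1) hi1n).mul (hcx (i+1) (by omega))).intervalIntegrable 0 T)]
          exact rfm_int_congr (fun t => by ring)
        have hpos : 0 < ∫ t in (0:ℝ)..T, u (i+1) t * (1 - x (i+1) t) :=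
          rfm_int_pos hT ((hu_cont (i+1) hi1n).mul (continuous_const.sub (hcx (i+1) (by omega))))
            (fun t => mul_pos (hu_pos (i+1) hi1n t) (by linarith [hxlt1 (i+1) (by omega) (by omega) t]))
        linarith [hsub ▸ hpos]
      -- value of gs (2q+1)
      have hg1 : gs (2*q+1) = R / (Ub1 * (1 - gs (2*q))) := by
        rw [hgss (2*q), hie1]
      have hden1 : 0 < Ub1 * (1 - gs (2*q)) := mul_pos hUb1pos (by linarith [hgk.2])
      have hg1nn : 0 ≤ gs (2*q+1) := by
        rw [hg1]; exact div_nonneg hRpos.le hden1.le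
      have hg1le : gs (2*q+1) ≤ Wk / Ub1 := by
        rw [hg1, div_le_div_iff₀ hden1 hUb1pos]
        nlinarith [hRb, hgk.1, hgk.2, hUb1pos, hWkpos]
      have hg1lt : gs (2*q+1) < 1 :=
        lt_of_le_of_lt hg1le ((div_lt_one hUb1pos).mpr hWkUb)
      -- value of gs (2q+2)
      set S := ∫ t in (0:ℝ)..T, u i t * (1 - x (i+1) t) with hSdef
      have hSpos : 0 < S := rfm_int_pos hT
        ((hu_cont i hin).mul (continuous_const.sub (hcx (i+1) (by omega))))
        (fun t => mul_pos (hu_pos i hin t) (by linarith [hxlt1 (i+1) (by omega) (by omega) t]))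
      have hUieq : (∫ t in (0:ℝ)..T, u i t) = α * Ub1 := by
        rw [hUb1def, ← intervalIntegral.integral_const_mul]
        exact rfm_int_congr (fun t => by rw [hαeq t])
      have hSeq : S = α * (Ub1 - Wk) := by
        have h1 : S = α * ∫ t in (0:ℝ)..T, u (i+1) t * (1 - x (i+1) t) := by
          rw [hSdef, ← intervalIntegral.integral_const_mul]
          exact rfm_int_congr (fun t => by rw [hαeq t]; ring)
        have h2 : (∫ t in (0:ℝ)..T, u (i+1) t * (1 - x (i+1) t)) = Ub1 - Wk := by
          rw [hUb1def, hWkdef, ← intervalIntegral.integral_sub (g := fun t => u (i+1) t * x (i+1) t)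
            ((hu_cont (i+1) hi1n).intervalIntegrable 0 T)
            (((hu_cont (i+1) hi1n).mul (hcx (i+1) (by omega))).intervalIntegrable 0 T)]
          exact rfm_int_congr (fun t => by ring)
        rw [h1, h2]
      have hdenS : S ≤ (∫ t in (0:ℝ)..T, u i t) * (1 - gs (2*q+1)) := by
        have h1 : gs (2*q+1) * Ub1 ≤ Wk := (le_div_iff₀ hUb1pos).mp hg1le
        rw [hUieq, hSeq]
        nlinarith [hα, hUb1pos]
      have hdenSpos : 0 < (∫ t in (0:ℝ)..T, u i t) * (1 - gs (2*q+1)) :=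
        lt_of_lt_of_le hSpos hdenS
      have hg2 : gs (2*q+2) = R / ((∫ t in (0:ℝ)..T, u i t) * (1 - gs (2*q+1))) := by
        rw [hgss (2*q+1), hie2]
      have hg2nn : 0 ≤ gs (2*q+2) := by
        rw [hg2]; exact div_nonneg hRpos.le hdenSpos.le
      have hg2le : gs (2*q+2) ≤ R / S := by
        rw [hg2, div_le_div_iff₀ hdenSpos hSpos]
        nlinarith [hRpos, hdenS, hSpos]
      -- the pair inequality at i
      set W2 := ∫ t in (0:ℝ)..T, u (i-1) t * x (i-1) t with hW2def
      have hW2pos : 0 < W2 := rfm_int_pos hT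
        ((hu_cont (i-1) (by omega)).mul (hcx (i-1) (by omega)))
        (fun t => mul_pos (hu_pos (i-1) (by omega) t) (hxpos (i-1) (by omega) t))
      have hp := hpair i hi1 hin
      rw [← hW2def, ← hSdef] at hp
      have hRS : R < S := by nlinarith [hp, hW2pos, hSpos, hRpos]
      have hg2lt : gs (2*q+2) < 1 :=
        lt_of_le_of_lt hg2le ((div_lt_one hSpos).mpr hRS)
      have hfin : R ≤ W2 * (1 - gs (2*q+2)) := by
        have h1 : R ≤ W2 * (1 - R / S) := by
          have h2 : W2 * (1 - R / S) = (W2 * S - W2 * R) / S := by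
            field_simp
          rw [h2, le_div_iff₀ hSpos]
          nlinarith [hp]
        have h3 : W2 * (1 - R / S) ≤ W2 * (1 - gs (2*q+2)) :=
          mul_le_mul_of_nonneg_left (by linarith [hg2le]) hW2pos.le
        linarith
      constructor
      · intro m hm
        rcases (by omega : m ≤ 2*q ∨ m = 2*q+1 ∨ m = 2*q+2) with h | h | h
        · exact hall m h
        · subst h; exact ⟨hg1nn, hg1lt⟩
        · subst h; exact ⟨hg2nn, hg2lt⟩
      · have h2e : 2*(q+1) = 2*q+2 := by ring
        rw [h2e, hie3]
        exact hfin
  -- extract the final bounds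
  have hhalf : 2 * (n / 2) = n := by omega
  obtain ⟨hall, hfinal⟩ := main (n / 2) (by omega)
  rw [hhalf] at hall hfinal
  rw [Nat.sub_self] at hfinal
  have hu0int : (∫ t in (0:ℝ)..T, u 0 t * x 0 t) = ∫ t in (0:ℝ)..T, u 0 t :=
    rfm_int_congr (fun t => by rw [hx0 t, mul_one])
  rw [hu0int] at hfinal
  -- hfinal : R ≤ (∫ u 0) * (1 - gs n)
  -- chain for the averaged equilibrium
  set RC := (∫ t in (0:ℝ)..T, u n t) * e n with hRCdef
  have hchain : ∀ d : ℕ, ∀ j, 1 ≤ j → j ≤ n → n - j = d →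
      (1/T * ∫ t in (0:ℝ)..T, u j t) * e j * (1 - e (j+1))
        = (1/T * ∫ t in (0:ℝ)..T, u n t) * e n * (1 - e (n+1)) := by
    intro d
    induction d with
    | zero =>
      intro j h1 h2 hd
      have : j = n := by omega
      subst this; rfl
    | succ d ih =>
      intro j h1 h2 hd
      have h1' : 1 ≤ j + 1 := by omega
      have h2' : j + 1 ≤ n := by omega
      have hq := heq (j+1) h1' h2'
      simp only [Nat.add_sub_cancel] at hq
      rw [hq]
      exact ih (j+1) h1' h2' (by omega)
  have hTne : (1:ℝ)/T ≠ 0 := one_div_ne_zero (ne_of_gt hT)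
  have hchain' : ∀ j, 1 ≤ j → j ≤ n →
      (∫ t in (0:ℝ)..T, u j t) * e j * (1 - e (j+1)) = RC := by
    intro j h1 h2
    have h := hchain (n - j) j h1 h2 rfl
    rw [hetop] at h
    apply mul_left_cancel₀ hTne
    rw [hRCdef]
    linear_combination h
  have hb0 : (∫ t in (0:ℝ)..T, u 0 t) * (1 - e 1) = RC := by
    have h := heq 1 le_rfl hn
    norm_num at h
    rw [he0] at h
    have h2 := hchain' 1 le_rfl hn
    apply mul_left_cancel₀ hTne
    rw [← h2]
    linear_combination h
  -- the key comparison
  have key : R ≤ RC := by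
    by_contra hcon
    push_neg at hcon
    have comp : ∀ k, k ≤ n → e (n+1-k) ≤ gs k := by
      intro k
      induction k with
      | zero =>
        intro _
        rw [Nat.sub_zero, hetop, hgs0]
      | succ k ihk =>
        intro hk1
        have ihv := ihk (by omega)
        have hj1 : 1 ≤ n - k := by omega
        have hj2 : n - k ≤ n := by omega
        have hidx1 : n + 1 - k = (n - k) + 1 := by omega
        rw [hidx1] at ihv
        have hgk := hall k (by omega)
        have henn : 0 ≤ e (n - k + 1) := by
          by_cases h : n - k + 1 ≤ n
          · exact (hemem (n-k+1) (by omega) h).1.le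
          · have : n - k + 1 = n + 1 := by omega
            rw [this, hetop]
        have hupos : 0 < ∫ t in (0:ℝ)..T, u (n-k) t := hub_pos (n-k) hj2
        have hden_e : 0 < (∫ t in (0:ℝ)..T, u (n-k) t) * (1 - e (n-k+1)) :=
          mul_pos hupos (by linarith [hgk.2, ihv])
        have hden_g : 0 < (∫ t in (0:ℝ)..T, u (n-k) t) * (1 - gs k) :=
          mul_pos hupos (by linarith [hgk.2])
        have hc := hchain' (n-k) hj1 hj2
        have hej : e (n-k) = RC / ((∫ t in (0:ℝ)..T, u (n-k) t) * (1 - e (n-k+1))) := by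
          rw [eq_div_iff (ne_of_gt hden_e)]
          linear_combination hc
        have hidx2 : n + 1 - (k+1) = n - k := by omega
        rw [hidx2, hej, hgss k]
        rw [div_le_div_iff₀ hden_e hden_g]
        have hRCpos : 0 < RC := by
          rw [hRCdef]
          exact mul_pos (hub_pos n le_rfl) (hemem n hn le_rfl).1
        have s1 : RC * ((∫ t in (0:ℝ)..T, u (n-k) t) * (1 - gs k))
            ≤ RC * ((∫ t in (0:ℝ)..T, u (n-k) t) * (1 - e (n-k+1))) := by
          apply mul_le_mul_of_nonneg_left _ hRCpos.le
          exact mul_le_mul_of_nonneg_left (by linarith) hupos.le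
        have s2 : RC * ((∫ t in (0:ℝ)..T, u (n-k) t) * (1 - e (n-k+1)))
            ≤ R * ((∫ t in (0:ℝ)..T, u (n-k) t) * (1 - e (n-k+1))) :=
          mul_le_mul_of_nonneg_right hcon.le hden_e.le
        linarith
    have hc1 := comp n le_rfl
    have hidx : n + 1 - n = 1 := by omega
    rw [hidx] at hc1
    -- R ≤ (∫ u 0)(1 - gs n) ≤ (∫ u 0)(1 - e 1) = RC < R
    have hu0pos : 0 < ∫ t in (0:ℝ)..T, u 0 t := hub_pos 0 (by omega)
    have : (∫ t in (0:ℝ)..T, u 0 t) * (1 - gs n) ≤ (∫ t in (0:ℝ)..T, u 0 t) * (1 - e 1) :=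
      mul_le_mul_of_nonneg_left (by linarith) hu0pos.le
    linarith [this, hfinal, hb0, hcon]
  have hTpos : 0 < 1/T := by positivity
  calc 1/T * ∫ t in (0:ℝ)..T, u n t * x n t
      ≤ 1/T * ((∫ t in (0:ℝ)..T, u n t) * e n) := by
        exact mul_le_mul_of_nonneg_left key hTpos.le
    _ = (1/T * ∫ t in (0:ℝ)..T, u n t) * e n := by ring
end
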